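/- arXiv:2307.03087 — 5 statements merged into one kernel-verified Lean document; each statement's English description precedes it below -/
import Mathlib

section
/- Let α ∈ (0,1], q ∈ (1,∞), μ < q−1, and T ∈ (0,∞]. Then there is a constant N = N(α,q,μ) > 0 such that for every measurable function f : (0,T) → ℝ, ∫₀ᵀ |t^{−α} I^α f(t)|^q t^μ dt ≤ N ∫₀ᵀ |f(t)|^q t^μ dt, where I^α f(t) = (1/Γ(α)) ∫₀ᵗ (t−s)^{α−1} f(s) ds. -/
open MeasureTheory Set ENNReal

/-- Scaling of a lintegral under `x ↦ c * x`. -/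
lemma hardy_scale (g : ℝ → ℝ≥0∞) (hg : Measurable g) {c : ℝ} (hc : 0 < c) :
    ∫⁻ x, g x = ENNReal.ofReal c * ∫⁻ x, g (c * x) := by
  have hmap : Measure.map (fun x : ℝ => c * x) volume
      = ENNReal.ofReal |c⁻¹| • volume := Real.map_volume_mul_left hc.ne'
  have h1 : ∫⁻ x, g (c * x) = ∫⁻ y, g y ∂(Measure.map (fun x : ℝ => c * x) volume) :=
    (lintegral_map hg (measurable_const_mul c)).symm
  rw [h1, hmap, lintegral_smul_measure, smul_eq_mul, abs_of_pos (inv_pos.mpr hc), ← mul_assoc,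
    ← ENNReal.ofReal_mul hc.le, mul_inv_cancel₀ hc.ne', ENNReal.ofReal_one, one_mul]

/-- Change of variables `s = t·u` for the beta-type integral on `(0,t)`. -/
lemma hardy_scaleA {α : ℝ} {t : ℝ} (ht : 0 < t) (c : ℝ) :
    ∫⁻ s in Ioo (0:ℝ) t, ENNReal.ofReal ((t - s) ^ (α - 1) * s ^ c)
      = ENNReal.ofReal (t ^ (α + c)) *
        ∫⁻ u in Ioo (0:ℝ) 1, ENNReal.ofReal ((1 - u) ^ (α - 1) * u ^ c) := by
  have hmeas : Measurable fun s : ℝ => ENNReal.ofReal ((t - s) ^ (α - 1) * s ^ c) := by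
    apply Measurable.ennreal_ofReal
    exact ((measurable_const.sub measurable_id).pow measurable_const).mul
      (measurable_id.pow measurable_const)
  have hind : Measurable ((Ioo (0:ℝ) t).indicator
      fun s => ENNReal.ofReal ((t - s) ^ (α - 1) * s ^ c)) :=
    hmeas.indicator measurableSet_Ioo
  rw [← lintegral_indicator measurableSet_Ioo, hardy_scale _ hind ht,
    ← lintegral_indicator (measurableSet_Ioo (a := (0:ℝ)) (b := 1))]
  have hpt : ∀ x : ℝ, (Ioo (0:ℝ) t).indicator
      (fun s => ENNReal.ofReal ((t - s) ^ (α - 1) * s ^ c)) (t * x)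
      = ENNReal.ofReal (t ^ (α - 1 + c)) * (Ioo (0:ℝ) 1).indicator
          (fun u => ENNReal.ofReal ((1 - u) ^ (α - 1) * u ^ c)) x := by
    intro x
    by_cases hx : x ∈ Ioo (0:ℝ) 1
    · have hx1 : t * x ∈ Ioo 0 t := by
        constructor
        · exact mul_pos ht hx.1
        · nth_rewrite 2 [← mul_one t]
          exact mul_lt_mul_of_pos_left hx.2 ht
      rw [indicator_of_mem hx1, indicator_of_mem hx]
      have e1 : t - t * x = t * (1 - x) := by ring
      have e2 : (t * (1 - x)) ^ (α - 1) = t ^ (α - 1) * (1 - x) ^ (α - 1) :=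
        Real.mul_rpow ht.le (by linarith [hx.2])
      have e3 : (t * x) ^ c = t ^ c * x ^ c := Real.mul_rpow ht.le hx.1.le
      rw [e1, e2, e3, ← ENNReal.ofReal_mul (by positivity), Real.rpow_add ht]
      ring_nf
    · have hx1 : t * x ∉ Ioo 0 t := by
        intro hmem
        refine hx ⟨?_, ?_⟩
        · have := hmem.1
          nlinarith
        · have := hmem.2
          nth_rewrite 2 [← mul_one t] at this
          exact lt_of_mul_lt_mul_left this ht.le
      rw [indicator_of_notMem hx1, indicator_of_notMem hx, mul_zero]
  simp_rw [hpt]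
  rw [lintegral_const_mul _ (by
    apply Measurable.indicator _ measurableSet_Ioo
    exact Measurable.ennreal_ofReal (((measurable_const.sub measurable_id).pow
      measurable_const).mul (measurable_id.pow measurable_const))),
    ← mul_assoc, ← ENNReal.ofReal_mul ht.le]
  congr 2
  nth_rewrite 1 [← Real.rpow_one t]
  rw [← Real.rpow_add ht]
  ring_nf

/-- Change of variables `t = s·v` for the beta-type integral on `(s,∞)`. -/
lemma hardy_scaleB {α : ℝ} {s : ℝ} (hs : 0 < s) (γ : ℝ) :
    ∫⁻ t in Ioi s, ENNReal.ofReal ((t - s) ^ (α - 1) * t ^ γ)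
      = ENNReal.ofReal (s ^ (α + γ)) *
        ∫⁻ v in Ioi (1:ℝ), ENNReal.ofReal ((v - 1) ^ (α - 1) * v ^ γ) := by
  have hmeas : Measurable fun t : ℝ => ENNReal.ofReal ((t - s) ^ (α - 1) * t ^ γ) :=
    Measurable.ennreal_ofReal (((measurable_id.sub measurable_const).pow
      measurable_const).mul (measurable_id.pow measurable_const))
  have hind : Measurable ((Ioi s).indicator
      fun t => ENNReal.ofReal ((t - s) ^ (α - 1) * t ^ γ)) :=
    hmeas.indicator measurableSet_Ioi
  rw [← lintegral_indicator measurableSet_Ioi, hardy_scale _ hind hs,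
    ← lintegral_indicator (measurableSet_Ioi (a := (1:ℝ)))]
  have hpt : ∀ v : ℝ, (Ioi s).indicator
      (fun t => ENNReal.ofReal ((t - s) ^ (α - 1) * t ^ γ)) (s * v)
      = ENNReal.ofReal (s ^ (α - 1 + γ)) * (Ioi (1:ℝ)).indicator
          (fun v => ENNReal.ofReal ((v - 1) ^ (α - 1) * v ^ γ)) v := by
    intro v
    by_cases hv : v ∈ Ioi (1:ℝ)
    · have hv1 : s * v ∈ Ioi s := by
        have : s * 1 < s * v := mul_lt_mul_of_pos_left hv hs
        simpa using this
      rw [indicator_of_mem hv1, indicator_of_mem hv]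
      have hv0 : (0:ℝ) ≤ v - 1 := by simpa using hv.le
      have e1 : s * v - s = s * (v - 1) := by ring
      have e2 : (s * (v - 1)) ^ (α - 1) = s ^ (α - 1) * (v - 1) ^ (α - 1) :=
        Real.mul_rpow hs.le hv0
      have e3 : (s * v) ^ γ = s ^ γ * v ^ γ := Real.mul_rpow hs.le (by linarith)
      rw [e1, e2, e3, ← ENNReal.ofReal_mul (by positivity), Real.rpow_add hs]
      ring_nf
    · have hv1 : s * v ∉ Ioi s := by
        intro hmem
        refine hv ?_
        have : s * 1 < s * v := by simpa using hmem
        exact lt_of_mul_lt_mul_left this hs.le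
      rw [indicator_of_notMem hv1, indicator_of_notMem hv, mul_zero]
  simp_rw [hpt]
  rw [lintegral_const_mul _ (by
    apply Measurable.indicator _ measurableSet_Ioi
    exact Measurable.ennreal_ofReal (((measurable_id.sub measurable_const).pow
      measurable_const).mul (measurable_id.pow measurable_const))),
    ← mul_assoc, ← ENNReal.ofReal_mul hs.le]
  congr 2
  nth_rewrite 1 [← Real.rpow_one s]
  rw [← Real.rpow_add hs]
  ring_nf

lemma hardy_measA {α c : ℝ} : Measurable fun u : ℝ => (1 - u) ^ (α - 1) * u ^ c :=
  ((measurable_const.sub measurable_id).pow measurable_const).mul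
    (measurable_id.pow measurable_const)

lemma hardy_measB {α γ : ℝ} : Measurable fun v : ℝ => (v - 1) ^ (α - 1) * v ^ γ :=
  ((measurable_id.sub measurable_const).pow measurable_const).mul
    (measurable_id.pow measurable_const)

/-- Finiteness of the beta-type constant on `(0,1)`. -/
lemma hardy_finA {α c : ℝ} (hα : 0 < α) (hα1 : α ≤ 1) (hc : -1 < c) :
    ∫⁻ u in Ioo (0:ℝ) 1, ENNReal.ofReal ((1 - u) ^ (α - 1) * u ^ c) < ⊤ := by
  have hint : IntegrableOn (fun u : ℝ => (1 - u) ^ (α - 1) * u ^ c) (Ioo 0 1) := by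
    have hsub : Ioo (0:ℝ) 1 ⊆ Ioc 0 2⁻¹ ∪ Ioc 2⁻¹ 1 := by
      intro x hx
      rcases le_or_gt x 2⁻¹ with h | h
      · exact Or.inl ⟨hx.1, h⟩
      · exact Or.inr ⟨h, hx.2.le⟩
    refine IntegrableOn.mono_set (IntegrableOn.union ?_ ?_) hsub
    · -- near 0 : bound by (2⁻¹)^(α-1) * u ^ c
      have hg : IntegrableOn (fun u : ℝ => (2:ℝ)⁻¹ ^ (α - 1) * u ^ c) (Ioc 0 2⁻¹) := by
        refine Integrable.const_mul ?_ _
        have := intervalIntegral.intervalIntegrable_rpow' (a := 0) (b := 2⁻¹) hc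
        rwa [intervalIntegrable_iff_integrableOn_Ioc_of_le (by norm_num)] at this
      refine Integrable.mono' hg hardy_measA.aestronglyMeasurable ?_
      rw [ae_restrict_iff' measurableSet_Ioc]
      filter_upwards with u hu
      have h1 : (0:ℝ) < 1 - u := by
        have := hu.2; norm_num at this ⊢; linarith
      rw [Real.norm_eq_abs, abs_of_nonneg
        (mul_nonneg (Real.rpow_nonneg h1.le _) (Real.rpow_nonneg hu.1.le _))]
      refine mul_le_mul_of_nonneg_right ?_ (Real.rpow_nonneg hu.1.le c)
      refine Real.rpow_le_rpow_of_nonpos (by norm_num) ?_ (by linarith)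
      have := hu.2; linarith
    · -- near 1 : bound by max ((2⁻¹)^c) 1 * (1-u)^(α-1)
      have hg : IntegrableOn (fun u : ℝ => max ((2:ℝ)⁻¹ ^ c) 1 * (1 - u) ^ (α - 1))
          (Ioc 2⁻¹ 1) := by
        refine Integrable.const_mul ?_ _
        have h0 := intervalIntegral.intervalIntegrable_rpow' (a := 0) (b := 2⁻¹)
          (r := α - 1) (by linarith)
        have h1 := (h0.comp_sub_left 1).symm
        norm_num at h1
        rw [intervalIntegrable_iff_integrableOn_Ioc_of_le (by norm_num)] at h1
        rwa [show (1:ℝ)/2 = 2⁻¹ from by norm_num] at h1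
      refine Integrable.mono' hg hardy_measA.aestronglyMeasurable ?_
      rw [ae_restrict_iff' measurableSet_Ioc]
      filter_upwards with u hu
      have hu0 : (0:ℝ) < u := lt_trans (by norm_num) hu.1
      rw [Real.norm_eq_abs, abs_of_nonneg
        (mul_nonneg (Real.rpow_nonneg (by linarith [hu.2]) _) (Real.rpow_nonneg hu0.le _)),
        mul_comm]
      refine mul_le_mul_of_nonneg_right ?_ (Real.rpow_nonneg (by linarith [hu.2]) _)
      rcases le_or_gt 0 c with h | h
      · exact le_trans (Real.rpow_le_one hu0.le hu.2 h) (le_max_right _ _)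
      · exact le_trans (Real.rpow_le_rpow_of_nonpos (by norm_num) hu.1.le h.le)
          (le_max_left _ _)
  exact hint.lintegral_lt_top

/-- Finiteness of the beta-type constant on `(1,∞)`. -/
lemma hardy_finB {α γ : ℝ} (hα : 0 < α) (hα1 : α ≤ 1) (hγ : α + γ < 0) :
    ∫⁻ v in Ioi (1:ℝ), ENNReal.ofReal ((v - 1) ^ (α - 1) * v ^ γ) < ⊤ := by
  have hint : IntegrableOn (fun v : ℝ => (v - 1) ^ (α - 1) * v ^ γ) (Ioi 1) := by
    have hsub : Ioi (1:ℝ) ⊆ Ioc 1 2 ∪ Ioi 2 := by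
      intro x hx
      rcases le_or_gt x 2 with h | h
      · exact Or.inl ⟨hx, h⟩
      · exact Or.inr h
    refine IntegrableOn.mono_set (IntegrableOn.union ?_ ?_) hsub
    · have hg : IntegrableOn (fun v : ℝ => max ((2:ℝ) ^ γ) 1 * (v - 1) ^ (α - 1))
          (Ioc 1 2) := by
        refine Integrable.const_mul ?_ _
        have h0 := intervalIntegral.intervalIntegrable_rpow' (a := 0) (b := 1)
          (r := α - 1) (by linarith)
        have h1 := h0.comp_sub_right 1
        norm_num at h1
        rwa [intervalIntegrable_iff_integrableOn_Ioc_of_le (by norm_num)] at h1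
      refine Integrable.mono' hg hardy_measB.aestronglyMeasurable ?_
      rw [ae_restrict_iff' measurableSet_Ioc]
      filter_upwards with v hv
      have hv0 : (0:ℝ) < v := lt_trans one_pos hv.1
      have hv1 : (0:ℝ) ≤ v - 1 := by linarith [hv.1.le]
      rw [Real.norm_eq_abs, abs_of_nonneg
        (mul_nonneg (Real.rpow_nonneg hv1 _) (Real.rpow_nonneg hv0.le _)), mul_comm]
      refine mul_le_mul_of_nonneg_right ?_ (Real.rpow_nonneg hv1 _)
      rcases le_or_gt 0 γ with h | h
      · exact le_trans (Real.rpow_le_rpow hv0.le hv.2 h) (le_max_left _ _)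
      · exact le_trans (Real.rpow_le_one_of_one_le_of_nonpos hv.1.le h.le) (le_max_right _ _)
    · have hg : IntegrableOn (fun v : ℝ => (2:ℝ)⁻¹ ^ (α - 1) * v ^ (α - 1 + γ)) (Ioi 2) :=
        Integrable.const_mul (integrableOn_Ioi_rpow_of_lt (by linarith) two_pos) _
      refine Integrable.mono' hg hardy_measB.aestronglyMeasurable ?_
      rw [ae_restrict_iff' measurableSet_Ioi]
      filter_upwards with v hv
      have hv2 : (2:ℝ) < v := hv
      have hv0 : (0:ℝ) < v := by linarith
      have hv1 : (0:ℝ) ≤ v - 1 := by linarith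
      rw [Real.norm_eq_abs, abs_of_nonneg
        (mul_nonneg (Real.rpow_nonneg hv1 _) (Real.rpow_nonneg hv0.le _)),
        Real.rpow_add hv0, ← mul_assoc]
      refine mul_le_mul_of_nonneg_right ?_ (Real.rpow_nonneg hv0.le _)
      calc (v - 1) ^ (α - 1) ≤ (v * 2⁻¹) ^ (α - 1) := by
            refine Real.rpow_le_rpow_of_nonpos (by positivity) (by linarith) (by linarith)
        _ = v ^ (α - 1) * 2⁻¹ ^ (α - 1) := Real.mul_rpow hv0.le (by norm_num)
        _ = 2⁻¹ ^ (α - 1) * v ^ (α - 1) := mul_comm _ _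
  exact hint.lintegral_lt_top

lemma hardy_main (α q μ : ℝ) (hα : 0 < α) (hα1 : α ≤ 1) (hq : 1 < q) (hμ : μ < q - 1) :
    ∃ N : ℝ, 0 < N ∧ ∀ f : ℝ → ℝ, Measurable f →
      (∫⁻ t in Ioi (0:ℝ),
          ENNReal.ofReal (|t ^ (-α) *
            ((Real.Gamma α)⁻¹ * ∫ s in Ioo (0:ℝ) t, (t - s) ^ (α - 1) * f s)| ^ q * t ^ μ)) ≤
        ENNReal.ofReal N * ∫⁻ t in Ioi (0:ℝ), ENNReal.ofReal (|f t| ^ q * t ^ μ) := by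
  have hq0 : (0:ℝ) < q := by linarith
  have hq1 : (0:ℝ) < q - 1 := by linarith
  set p : ℝ := q / (q - 1) with hp_def
  have hpq : p.HolderConjugate q := (Real.HolderConjugate.conjExponent hq).symm
  have hp1 : 1 < p := hpq.lt
  have hp0 : (0:ℝ) < p := by linarith
  set b : ℝ := (μ + q - 1) / (2 * q) with hb_def
  have hbp : b * p < 1 := by
    have : b * p = (μ + q - 1) / (2 * (q - 1)) := by
      rw [hb_def, hp_def]; field_simp
    rw [this, div_lt_one (by linarith)]; linarith
  have hbq : μ < b * q := by
    have : b * q = (μ + q - 1) / 2 := by rw [hb_def]; field_simp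
    rw [this]; linarith
  set γ : ℝ := μ - α - b * q with hγ_def
  have hγ : α + γ < 0 := by simp only [hγ_def]; linarith
  set C1 : ℝ≥0∞ := ∫⁻ u in Ioo (0:ℝ) 1, ENNReal.ofReal ((1 - u) ^ (α - 1) * u ^ (-(b * p)))
    with hC1_def
  have hC1 : C1 < ⊤ := hardy_finA hα hα1 (by linarith)
  set C2 : ℝ≥0∞ := ∫⁻ v in Ioi (1:ℝ), ENNReal.ofReal ((v - 1) ^ (α - 1) * v ^ γ) with hC2_def
  have hC2 : C2 < ⊤ := hardy_finB hα hα1 hγ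
  have hG : (0:ℝ) < Real.Gamma α := Real.Gamma_pos_of_pos hα
  set K : ℝ≥0∞ := ENNReal.ofReal ((Real.Gamma α)⁻¹ ^ q) * C1 ^ (q - 1) * C2 with hK_def
  have hK : K ≠ ⊤ := by
    refine ENNReal.mul_ne_top (ENNReal.mul_ne_top ENNReal.ofReal_ne_top ?_) hC2.ne
    exact (ENNReal.rpow_lt_top_of_nonneg (by linarith) hC1.ne).ne
  refine ⟨K.toReal + 1, by positivity, fun f hf => ?_⟩
  have hKN : K ≤ ENNReal.ofReal (K.toReal + 1) := by
    rw [ENNReal.ofReal_add ENNReal.toReal_nonneg zero_le_one, ENNReal.ofReal_toReal hK]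
    exact le_self_add
  -- the main estimate with constant K
  suffices hmain : (∫⁻ t in Ioi (0:ℝ),
      ENNReal.ofReal (|t ^ (-α) *
        ((Real.Gamma α)⁻¹ * ∫ s in Ioo (0:ℝ) t, (t - s) ^ (α - 1) * f s)| ^ q * t ^ μ)) ≤
      K * ∫⁻ t in Ioi (0:ℝ), ENNReal.ofReal (|f t| ^ q * t ^ μ) by
    refine hmain.trans (mul_le_mul_left hKN _)
  clear hKN
  have hGpos : (0:ℝ) < (Real.Gamma α)⁻¹ := by positivity
  set F : ℝ → ℝ≥0∞ := fun s => ENNReal.ofReal |f s| with hF_def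
  have hFmeas : Measurable F := hf.abs.ennreal_ofReal
  set D : ℝ≥0∞ := ENNReal.ofReal ((Real.Gamma α)⁻¹ ^ q) * C1 ^ (q - 1) with hD_def
  have hD : D ≠ ⊤ := ENNReal.mul_ne_top ENNReal.ofReal_ne_top
    (ENNReal.rpow_lt_top_of_nonneg (by linarith) hC1.ne).ne
  have hinv : 1 / p + 1 / q = 1 := by
    have := hpq.inv_add_inv_eq_one
    simpa [one_div] using this
  have key : ∀ t ∈ Ioi (0:ℝ),
      ENNReal.ofReal (|t ^ (-α) *
          ((Real.Gamma α)⁻¹ * ∫ s in Ioo (0:ℝ) t, (t - s) ^ (α - 1) * f s)| ^ q * t ^ μ)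
        ≤ D * ∫⁻ s in Ioo (0:ℝ) t,
            ENNReal.ofReal (t ^ γ * ((t - s) ^ (α - 1) * s ^ (b * q))) * F s ^ q := by
    intro t ht
    rw [mem_Ioi] at ht
    have htα : (0:ℝ) < t ^ (-α) := Real.rpow_pos_of_pos ht _
    set J : ℝ := ∫ s in Ioo (0:ℝ) t, (t - s) ^ (α - 1) * f s with hJ_def
    set W : ℝ≥0∞ := ∫⁻ s in Ioo (0:ℝ) t, ENNReal.ofReal ((t - s) ^ (α - 1)) * F s with hW_def
    set B : ℝ≥0∞ := ∫⁻ s in Ioo (0:ℝ) t,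
      ENNReal.ofReal ((t - s) ^ (α - 1) * s ^ (b * q)) * F s ^ q with hB_def
    -- Step 1 : split the `ofReal` into a product
    have h1 : ENNReal.ofReal (|t ^ (-α) * ((Real.Gamma α)⁻¹ * J)| ^ q * t ^ μ)
        = ENNReal.ofReal ((Real.Gamma α)⁻¹ ^ q) * ENNReal.ofReal ((t ^ (-α)) ^ q * t ^ μ)
          * ENNReal.ofReal |J| ^ q := by
      rw [abs_mul, abs_mul, abs_of_pos htα, abs_of_pos hGpos,
        Real.mul_rpow htα.le (by positivity), Real.mul_rpow hGpos.le (abs_nonneg _),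
        ENNReal.ofReal_rpow_of_nonneg (abs_nonneg _) hq0.le,
        ← ENNReal.ofReal_mul (by positivity), ← ENNReal.ofReal_mul (by positivity)]
      congr 1
      ring
    -- Step 2 : |J| ≤ W in `ℝ≥0∞`
    have h2 : ENNReal.ofReal |J| ≤ W := by
      rw [← Real.enorm_eq_ofReal_abs]
      refine le_trans (enorm_integral_le_lintegral_enorm _) (le_of_eq ?_)
      refine setLIntegral_congr_fun measurableSet_Ioo (fun s hs => ?_)
      rw [Real.enorm_eq_ofReal_abs, abs_mul,
        abs_of_nonneg (Real.rpow_nonneg (by linarith [hs.2]) _),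
        ENNReal.ofReal_mul (Real.rpow_nonneg (by linarith [hs.2]) _)]
    -- Step 3 : Hölder's inequality
    have h3 : W ≤ (ENNReal.ofReal (t ^ (α - b * p)) * C1) ^ (1 / p) * B ^ (1 / q) := by
      set φ : ℝ → ℝ≥0∞ := fun s =>
        ENNReal.ofReal ((t - s) ^ (α - 1) * s ^ (-(b * p))) ^ (1 / p) with hφ_def
      set ψ : ℝ → ℝ≥0∞ := fun s =>
        (ENNReal.ofReal ((t - s) ^ (α - 1) * s ^ (b * q)) * F s ^ q) ^ (1 / q) with hψ_def
      have hφm : Measurable φ := (Measurable.ennreal_ofReal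
        (((measurable_const.sub measurable_id).pow measurable_const).mul
          (measurable_id.pow measurable_const))).pow measurable_const
      have hψm : Measurable ψ := ((Measurable.ennreal_ofReal
        (((measurable_const.sub measurable_id).pow measurable_const).mul
          (measurable_id.pow measurable_const))).mul
          (hFmeas.pow measurable_const)).pow measurable_const
      have hae : ∀ᵐ s ∂(volume.restrict (Ioo (0:ℝ) t)),
          ENNReal.ofReal ((t - s) ^ (α - 1)) * F s = φ s * ψ s := by
        rw [ae_restrict_iff' measurableSet_Ioo]
        filter_upwards with s hs
        have hts : (0:ℝ) < t - s := by linarith [hs.2]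
        have hs0 : (0:ℝ) < s := hs.1
        have hXp : (0:ℝ) < (t - s) ^ (α - 1) * s ^ (-(b * p)) := by positivity
        have hYp : (0:ℝ) < (t - s) ^ (α - 1) * s ^ (b * q) := by positivity
        have eφ : φ s = ENNReal.ofReal (((t - s) ^ (α - 1) * s ^ (-(b * p))) ^ (1 / p)) := by
          simp only [hφ_def]; rw [ENNReal.ofReal_rpow_of_pos hXp]
        have eψ : ψ s = ENNReal.ofReal (((t - s) ^ (α - 1) * s ^ (b * q)) ^ (1 / q)) * F s := by
          simp only [hψ_def]; rw [ENNReal.mul_rpow_of_nonneg _ _ (by positivity),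
            ENNReal.ofReal_rpow_of_pos hYp, ← ENNReal.rpow_mul,
            mul_one_div, div_self hq0.ne', ENNReal.rpow_one]
        rw [eφ, eψ, ← mul_assoc, ← ENNReal.ofReal_mul (Real.rpow_nonneg hXp.le _)]
        congr 2
        rw [Real.mul_rpow (Real.rpow_nonneg hts.le _) (Real.rpow_nonneg hs0.le _),
          Real.mul_rpow (Real.rpow_nonneg hts.le _) (Real.rpow_nonneg hs0.le _),
          ← Real.rpow_mul hts.le, ← Real.rpow_mul hs0.le,
          ← Real.rpow_mul hts.le, ← Real.rpow_mul hs0.le,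
          mul_mul_mul_comm, ← Real.rpow_add hts, ← Real.rpow_add hs0]
        have e1 : (α - 1) * (1 / p) + (α - 1) * (1 / q) = α - 1 := by
          rw [← mul_add, hinv, mul_one]
        have e2 : -(b * p) * (1 / p) + b * q * (1 / q) = 0 := by
          field_simp
          ring
        rw [e1, e2, Real.rpow_zero, mul_one]
      have hHolder := ENNReal.lintegral_mul_le_Lp_mul_Lq
        (volume.restrict (Ioo (0:ℝ) t)) hpq hφm.aemeasurable hψm.aemeasurable
      have eφp : ∫⁻ s in Ioo (0:ℝ) t, φ s ^ p
          = ENNReal.ofReal (t ^ (α - b * p)) * C1 := by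
        have : ∀ s, φ s ^ p = ENNReal.ofReal ((t - s) ^ (α - 1) * s ^ (-(b * p))) := by
          intro s
          simp only [hφ_def]; rw [← ENNReal.rpow_mul, one_div, inv_mul_cancel₀ (by positivity : p ≠ 0),
            ENNReal.rpow_one]
        simp_rw [this]
        rw [show α - b * p = α + -(b * p) by ring]
        exact hardy_scaleA ht _
      have eψq : ∫⁻ s in Ioo (0:ℝ) t, ψ s ^ q = B := by
        have : ∀ s, ψ s ^ q
            = ENNReal.ofReal ((t - s) ^ (α - 1) * s ^ (b * q)) * F s ^ q := by
          intro s
          simp only [hψ_def]; rw [← ENNReal.rpow_mul, one_div, inv_mul_cancel₀ (by positivity : q ≠ 0),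
            ENNReal.rpow_one]
        simp_rw [this]
        exact hB_def.symm
      calc W = ∫⁻ s in Ioo (0:ℝ) t, φ s * ψ s := lintegral_congr_ae hae
        _ ≤ (∫⁻ s in Ioo (0:ℝ) t, φ s ^ p) ^ (1 / p)
            * (∫⁻ s in Ioo (0:ℝ) t, ψ s ^ q) ^ (1 / q) := hHolder
        _ = (ENNReal.ofReal (t ^ (α - b * p)) * C1) ^ (1 / p) * B ^ (1 / q) := by
            rw [eφp, eψq]
    -- Step 4 : raise to the power q and combine
    have hp2 : p * (q - 1) = q := by rw [hp_def]; field_simp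
    have hq_div : 1 / p * q = q - 1 := by
      rw [hp_def]; field_simp
    have h4 : W ^ q ≤ ENNReal.ofReal (t ^ ((α - b * p) * (q - 1))) * C1 ^ (q - 1) * B := by
      calc W ^ q ≤ ((ENNReal.ofReal (t ^ (α - b * p)) * C1) ^ (1 / p) * B ^ (1 / q)) ^ q :=
            ENNReal.rpow_le_rpow h3 hq0.le
        _ = (ENNReal.ofReal (t ^ (α - b * p)) * C1) ^ (1 / p * q) * B ^ (1 / q * q) := by
            rw [ENNReal.mul_rpow_of_nonneg _ _ hq0.le, ← ENNReal.rpow_mul, ← ENNReal.rpow_mul]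
        _ = ENNReal.ofReal (t ^ ((α - b * p) * (q - 1))) * C1 ^ (q - 1) * B := by
            rw [hq_div, one_div, inv_mul_cancel₀ hq0.ne', ENNReal.rpow_one,
              ENNReal.mul_rpow_of_nonneg _ _ (by linarith : (0:ℝ) ≤ q - 1),
              ENNReal.ofReal_rpow_of_pos (Real.rpow_pos_of_pos ht _),
              ← Real.rpow_mul ht.le]
    have hT : (t ^ (-α)) ^ q * t ^ μ * t ^ ((α - b * p) * (q - 1)) = t ^ γ := by
      rw [← Real.rpow_mul ht.le, ← Real.rpow_add ht, ← Real.rpow_add ht]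
      congr 1
      rw [hγ_def]
      linear_combination (-b) * hp2
    have hBfin : ENNReal.ofReal (t ^ γ) * B
        = ∫⁻ s in Ioo (0:ℝ) t,
            ENNReal.ofReal (t ^ γ * ((t - s) ^ (α - 1) * s ^ (b * q))) * F s ^ q := by
      rw [hB_def, ← lintegral_const_mul' _ _ ENNReal.ofReal_ne_top]
      refine lintegral_congr fun s => ?_
      rw [ENNReal.ofReal_mul (Real.rpow_nonneg ht.le _), mul_assoc]
    calc ENNReal.ofReal (|t ^ (-α) * ((Real.Gamma α)⁻¹ * J)| ^ q * t ^ μ)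
        = ENNReal.ofReal ((Real.Gamma α)⁻¹ ^ q) * ENNReal.ofReal ((t ^ (-α)) ^ q * t ^ μ)
          * ENNReal.ofReal |J| ^ q := h1
      _ ≤ ENNReal.ofReal ((Real.Gamma α)⁻¹ ^ q) * ENNReal.ofReal ((t ^ (-α)) ^ q * t ^ μ)
          * W ^ q := mul_le_mul_right (ENNReal.rpow_le_rpow h2 hq0.le) _
      _ ≤ ENNReal.ofReal ((Real.Gamma α)⁻¹ ^ q) * ENNReal.ofReal ((t ^ (-α)) ^ q * t ^ μ)
          * (ENNReal.ofReal (t ^ ((α - b * p) * (q - 1))) * C1 ^ (q - 1) * B) :=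
            mul_le_mul_right h4 _
      _ = D * (ENNReal.ofReal (t ^ γ) * B) := by
          rw [hD_def, ← hT,
            ENNReal.ofReal_mul (show (0:ℝ) ≤ (t ^ (-α)) ^ q * t ^ μ by positivity)]
          ring
      _ = D * ∫⁻ s in Ioo (0:ℝ) t,
            ENNReal.ofReal (t ^ γ * ((t - s) ^ (α - 1) * s ^ (b * q))) * F s ^ q := by
          rw [hBfin]
  -- integrate the pointwise bound
  set R : ℝ≥0∞ := ∫⁻ t in Ioi (0:ℝ), ENNReal.ofReal (|f t| ^ q * t ^ μ) with hR_def
  set U : ℝ × ℝ → ℝ≥0∞ := fun z =>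
    ({w : ℝ × ℝ | 0 < w.2 ∧ w.2 < w.1}).indicator
      (fun w => ENNReal.ofReal (w.1 ^ γ * ((w.1 - w.2) ^ (α - 1) * w.2 ^ (b * q)))
        * F w.2 ^ q) z with hU_def
  have hUmeas : Measurable U := by
    refine Measurable.indicator ?_ ?_
    · exact (Measurable.ennreal_ofReal ((measurable_fst.pow measurable_const).mul
        (((measurable_fst.sub measurable_snd).pow measurable_const).mul
          (measurable_snd.pow measurable_const)))).mul
        ((hFmeas.comp measurable_snd).pow measurable_const)
    · exact (measurableSet_lt measurable_const measurable_snd).inter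
        (measurableSet_lt measurable_snd measurable_fst)
  have eq1 : ∀ t : ℝ, (∫⁻ s in Ioo (0:ℝ) t,
      ENNReal.ofReal (t ^ γ * ((t - s) ^ (α - 1) * s ^ (b * q))) * F s ^ q)
      = ∫⁻ s, U (t, s) := by
    intro t
    rw [← lintegral_indicator measurableSet_Ioo]
    refine lintegral_congr fun s => ?_
    by_cases hs : s ∈ Ioo (0:ℝ) t
    · rw [indicator_of_mem hs]
      simp only [hU_def]
      rw [indicator_of_mem (show ((t, s) : ℝ × ℝ) ∈ {w : ℝ × ℝ | 0 < w.2 ∧ w.2 < w.1} from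
          ⟨hs.1, hs.2⟩)]
    · rw [indicator_of_notMem hs]
      simp only [hU_def]
      rw [indicator_of_notMem
        (show ((t, s) : ℝ × ℝ) ∉ {w : ℝ × ℝ | 0 < w.2 ∧ w.2 < w.1} from
          fun hmem => hs ⟨hmem.1, hmem.2⟩)]
  have eq2 : ∫⁻ t in Ioi (0:ℝ), ∫⁻ s, U (t, s) = ∫⁻ t, ∫⁻ s, U (t, s) := by
    rw [← lintegral_indicator measurableSet_Ioi]
    refine lintegral_congr fun t => ?_
    by_cases ht : t ∈ Ioi (0:ℝ)
    · rw [indicator_of_mem ht]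
    · rw [indicator_of_notMem ht]
      have hz : ∀ s, U (t, s) = 0 := by
        intro s
        simp only [hU_def]
        refine indicator_of_notMem ?_ _
        rintro ⟨h1, h2⟩
        exact ht (mem_Ioi.2 (lt_trans h1 h2))
      simp [hz]
  have eq3 : ∫⁻ t, ∫⁻ s, U (t, s) = ∫⁻ s, ∫⁻ t, U (t, s) :=
    lintegral_lintegral_swap hUmeas.aemeasurable
  have eq4 : ∀ s : ℝ, (∫⁻ t, U (t, s))
      = (Ioi (0:ℝ)).indicator
          (fun s => C2 * (F s ^ q * ENNReal.ofReal (s ^ μ))) s := by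
    intro s
    by_cases hs : s ∈ Ioi (0:ℝ)
    · rw [indicator_of_mem hs]
      have hs0 : (0:ℝ) < s := hs
      have hu : ∀ t, U (t, s) = (Ioi s).indicator
          (fun t => ENNReal.ofReal (t ^ γ * ((t - s) ^ (α - 1) * s ^ (b * q))) * F s ^ q) t := by
        intro t
        simp only [hU_def]
        by_cases htm : t ∈ Ioi s
        · rw [indicator_of_mem
            (show ((t, s) : ℝ × ℝ) ∈ {w : ℝ × ℝ | 0 < w.2 ∧ w.2 < w.1} from ⟨hs0, htm⟩),
            indicator_of_mem htm]
        · rw [indicator_of_notMem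
            (show ((t, s) : ℝ × ℝ) ∉ {w : ℝ × ℝ | 0 < w.2 ∧ w.2 < w.1} from
              fun hmem => htm hmem.2), indicator_of_notMem htm]
      simp_rw [hu]
      rw [lintegral_indicator measurableSet_Ioi]
      have hpt : ∀ t ∈ Ioi s,
          ENNReal.ofReal (t ^ γ * ((t - s) ^ (α - 1) * s ^ (b * q))) * F s ^ q
          = (F s ^ q * ENNReal.ofReal (s ^ (b * q)))
            * ENNReal.ofReal ((t - s) ^ (α - 1) * t ^ γ) := by
        intro t htm
        rw [mem_Ioi] at htm
        have hts : (0:ℝ) < t - s := by linarith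
        have ht0 : (0:ℝ) < t := lt_trans hs0 htm
        rw [show t ^ γ * ((t - s) ^ (α - 1) * s ^ (b * q))
            = ((t - s) ^ (α - 1) * t ^ γ) * s ^ (b * q) from by ring,
          ENNReal.ofReal_mul (by positivity)]
        ring
      rw [setLIntegral_congr_fun measurableSet_Ioi hpt,
        lintegral_const_mul' _ _ (ENNReal.mul_ne_top
          (ENNReal.rpow_lt_top_of_nonneg hq0.le ENNReal.ofReal_ne_top).ne
          ENNReal.ofReal_ne_top),
        hardy_scaleB hs0 γ]
      have hsμ : ENNReal.ofReal (s ^ (b * q)) * ENNReal.ofReal (s ^ (α + γ))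
          = ENNReal.ofReal (s ^ μ) := by
        rw [← ENNReal.ofReal_mul (Real.rpow_nonneg hs0.le _), ← Real.rpow_add hs0]
        congr 1
        simp only [hγ_def]
        ring
      calc F s ^ q * ENNReal.ofReal (s ^ (b * q))
          * (ENNReal.ofReal (s ^ (α + γ)) * C2)
          = C2 * (F s ^ q * (ENNReal.ofReal (s ^ (b * q)) * ENNReal.ofReal (s ^ (α + γ)))) := by
            ring
        _ = C2 * (F s ^ q * ENNReal.ofReal (s ^ μ)) := by rw [hsμ]
    · rw [indicator_of_notMem hs]
      have hz : ∀ t, U (t, s) = 0 := by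
        intro t
        simp only [hU_def]
        exact indicator_of_notMem (fun hmem => hs (mem_Ioi.2 hmem.1)) _
      simp [hz]
  have eq5 : (∫⁻ s, (Ioi (0:ℝ)).indicator
        (fun s => C2 * (F s ^ q * ENNReal.ofReal (s ^ μ))) s) = C2 * R := by
    rw [lintegral_indicator measurableSet_Ioi, lintegral_const_mul' _ _ hC2.ne, hR_def]
    congr 1
    refine lintegral_congr fun s => ?_
    rw [ENNReal.ofReal_mul (by positivity), ← ENNReal.ofReal_rpow_of_nonneg (abs_nonneg _) hq0.le]
  calc (∫⁻ t in Ioi (0:ℝ), ENNReal.ofReal (|t ^ (-α) *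
        ((Real.Gamma α)⁻¹ * ∫ s in Ioo (0:ℝ) t, (t - s) ^ (α - 1) * f s)| ^ q * t ^ μ))
      ≤ ∫⁻ t in Ioi (0:ℝ), D * ∫⁻ s in Ioo (0:ℝ) t,
          ENNReal.ofReal (t ^ γ * ((t - s) ^ (α - 1) * s ^ (b * q))) * F s ^ q := by
        refine lintegral_mono_ae ((ae_restrict_iff' measurableSet_Ioi).2 (ae_of_all _ ?_))
        exact fun t ht => key t ht
    _ = D * ∫⁻ t in Ioi (0:ℝ), ∫⁻ s in Ioo (0:ℝ) t,
          ENNReal.ofReal (t ^ γ * ((t - s) ^ (α - 1) * s ^ (b * q))) * F s ^ q :=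
        lintegral_const_mul' _ _ hD
    _ = D * ∫⁻ t in Ioi (0:ℝ), ∫⁻ s, U (t, s) := by
        congr 1
        exact lintegral_congr fun t => eq1 t
    _ = D * ∫⁻ s, ∫⁻ t, U (t, s) := by rw [eq2, eq3]
    _ = D * ∫⁻ s, (Ioi (0:ℝ)).indicator
          (fun s => C2 * (F s ^ q * ENNReal.ofReal (s ^ μ))) s := by
        congr 1
        exact lintegral_congr fun s => eq4 s
    _ = D * (C2 * R) := by rw [eq5]
    _ = K * R := by rw [hK_def, hD_def]; ring

/-- Weighted Hardy-type inequality for the Riemann–Liouville fractional integral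
`I^α f(t) = (1/Γ(α)) ∫₀ᵗ (t−s)^{α−1} f(s) ds` on `(0,T)` with `T ∈ (0,∞]`. -/
theorem stmt_0 (α q μ : ℝ) (hα : 0 < α) (hα1 : α ≤ 1) (hq : 1 < q) (hμ : μ < q - 1) :
    ∃ N : ℝ, 0 < N ∧ ∀ (T : ℝ≥0∞), 0 < T → ∀ f : ℝ → ℝ, Measurable f →
      (∫⁻ t in {t : ℝ | 0 < t ∧ ENNReal.ofReal t < T},
          ENNReal.ofReal (|t ^ (-α) *
            ((Real.Gamma α)⁻¹ * ∫ s in Ioo (0:ℝ) t, (t - s) ^ (α - 1) * f s)| ^ q * t ^ μ)) ≤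
        ENNReal.ofReal N *
          ∫⁻ t in {t : ℝ | 0 < t ∧ ENNReal.ofReal t < T},
            ENNReal.ofReal (|f t| ^ q * t ^ μ) := by
  obtain ⟨N, hN, hmain⟩ := hardy_main α q μ hα hα1 hq hμ
  refine ⟨N, hN, fun T hT f hf => ?_⟩
  have hq0 : (0:ℝ) < q := by linarith
  set S : Set ℝ := {t : ℝ | 0 < t ∧ ENNReal.ofReal t < T} with hS_def
  have hSmeas : MeasurableSet S := by
    rw [hS_def, setOf_and]
    exact (measurableSet_lt measurable_const measurable_id).inter
      (measurableSet_lt ENNReal.measurable_ofReal measurable_const)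
  have hSsub : S ⊆ Ioi 0 := fun t ht => ht.1
  set g : ℝ → ℝ := S.indicator f with hg_def
  have hgmeas : Measurable g := hf.indicator hSmeas
  have hEq1 : ∀ t ∈ S, (∫ s in Ioo (0:ℝ) t, (t - s) ^ (α - 1) * f s)
      = ∫ s in Ioo (0:ℝ) t, (t - s) ^ (α - 1) * g s := by
    intro t ht
    refine (setIntegral_congr_fun measurableSet_Ioo fun s hs => ?_).symm
    have hsS : s ∈ S := ⟨hs.1, lt_of_le_of_lt (ENNReal.ofReal_le_ofReal hs.2.le) ht.2⟩
    rw [hg_def]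
    simp only [indicator_of_mem hsS]
  have hEq2 : (∫⁻ t in Ioi (0:ℝ), ENNReal.ofReal (|g t| ^ q * t ^ μ))
      = ∫⁻ t in S, ENNReal.ofReal (|f t| ^ q * t ^ μ) := by
    have hpt : ∀ t ∈ Ioi (0:ℝ), ENNReal.ofReal (|g t| ^ q * t ^ μ)
        = S.indicator (fun t => ENNReal.ofReal (|f t| ^ q * t ^ μ)) t := by
      intro t _
      by_cases htS : t ∈ S
      · rw [indicator_of_mem htS, hg_def]
        simp only [indicator_of_mem htS]
      · rw [indicator_of_notMem htS, hg_def]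
        simp only [indicator_of_notMem htS, abs_zero, Real.zero_rpow hq0.ne', zero_mul,
          ENNReal.ofReal_zero]
    rw [setLIntegral_congr_fun measurableSet_Ioi hpt,
      lintegral_indicator hSmeas, Measure.restrict_restrict hSmeas,
      inter_eq_self_of_subset_left hSsub]
  calc (∫⁻ t in S, ENNReal.ofReal (|t ^ (-α) *
        ((Real.Gamma α)⁻¹ * ∫ s in Ioo (0:ℝ) t, (t - s) ^ (α - 1) * f s)| ^ q * t ^ μ))
      = ∫⁻ t in S, ENNReal.ofReal (|t ^ (-α) *
          ((Real.Gamma α)⁻¹ * ∫ s in Ioo (0:ℝ) t, (t - s) ^ (α - 1) * g s)| ^ q * t ^ μ) := by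
        refine setLIntegral_congr_fun hSmeas (fun t ht => ?_)
        rw [hEq1 t ht]
    _ ≤ ∫⁻ t in Ioi (0:ℝ), ENNReal.ofReal (|t ^ (-α) *
          ((Real.Gamma α)⁻¹ * ∫ s in Ioo (0:ℝ) t, (t - s) ^ (α - 1) * g s)| ^ q * t ^ μ) :=
        lintegral_mono_set hSsub
    _ ≤ ENNReal.ofReal N * ∫⁻ t in Ioi (0:ℝ), ENNReal.ofReal (|g t| ^ q * t ^ μ) :=
        hmain g hgmeas
    _ = ENNReal.ofReal N * ∫⁻ t in S, ENNReal.ofReal (|f t| ^ q * t ^ μ) := by rw [hEq2]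
end

section
/- Let α ∈ (0,1) and f ∈ L_q((0,T), t^μ dt) with q ∈ (1,∞), μ ∈ (−1,q−1). If u = I^α f on (0,T), then ∫₀ᵀ |u(t)|^q t^μ dt ≤ N T^{αq} ∫₀ᵀ |f(t)|^q t^μ dt, with N = N(α,q,μ). -/
open MeasureTheory Set
open scoped ENNReal

lemma aux_ofReal_abs_integral_le (g : ℝ → ℝ) (s : Set ℝ) :
    ENNReal.ofReal |∫ x in s, g x| ≤ ∫⁻ x in s, ENNReal.ofReal |g x| := by
  by_cases h : IntegrableOn g s
  · calc ENNReal.ofReal |∫ x in s, g x|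
        ≤ ENNReal.ofReal (∫ x in s, |g x|) := by
          refine ENNReal.ofReal_le_ofReal ?_
          simpa [Real.norm_eq_abs] using norm_integral_le_integral_norm (μ := volume.restrict s) g
      _ = ∫⁻ x in s, ENNReal.ofReal |g x| :=
          ofReal_integral_eq_lintegral_ofReal h.abs (ae_of_all _ fun x => abs_nonneg _)
  · rw [integral_undef h]
    simp

lemma aux_scale {t : ℝ} (ht : 0 < t) {g : ℝ → ℝ≥0∞} (hg : Measurable g) :
    ∫⁻ s in Ioo (0:ℝ) t, g s = ENNReal.ofReal t * ∫⁻ σ in Ioo (0:ℝ) 1, g (t * σ) := by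
  have key : ∀ σ : ℝ, t * σ ∈ Ioo (0:ℝ) t ↔ σ ∈ Ioo (0:ℝ) 1 := by
    intro σ
    simp only [mem_Ioo]
    constructor
    · rintro ⟨h1, h2⟩
      constructor <;> nlinarith
    · rintro ⟨h1, h2⟩
      constructor <;> nlinarith
  have h1 : ∫⁻ σ in Ioo (0:ℝ) 1, g (t * σ) = ∫⁻ σ, (Ioo (0:ℝ) t).indicator g (t * σ) := by
    rw [← lintegral_indicator measurableSet_Ioo]
    congr 1
    funext σ
    by_cases hσ : σ ∈ Ioo (0:ℝ) 1
    · rw [indicator_of_mem hσ, indicator_of_mem ((key σ).2 hσ)]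
    · rw [indicator_of_notMem hσ, indicator_of_notMem (fun hmem => hσ ((key σ).1 hmem))]
  have h2 : ∫⁻ σ, (Ioo (0:ℝ) t).indicator g (t * σ) ∂volume
      = ∫⁻ y, (Ioo (0:ℝ) t).indicator g y ∂(Measure.map (t * ·) volume) := by
    rw [lintegral_map (hg.indicator measurableSet_Ioo) (measurable_const_mul t)]
  rw [h1, h2, Real.map_volume_mul_left (ne_of_gt ht), lintegral_smul_measure,
    lintegral_indicator measurableSet_Ioo, abs_of_pos (inv_pos.2 ht), smul_eq_mul, ← mul_assoc,
    ← ENNReal.ofReal_mul ht.le, mul_inv_cancel₀ (ne_of_gt ht), ENNReal.ofReal_one, one_mul]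

lemma aux_translate (s T : ℝ) {g : ℝ → ℝ≥0∞} (hg : Measurable g) :
    ∫⁻ t in Ioo s T, g (t - s) = ∫⁻ u in Ioo (0:ℝ) (T - s), g u := by
  have hmp : MeasurePreserving (fun u : ℝ => u + s) volume volume :=
    measurePreserving_add_right volume s
  have hemb : MeasurableEmbedding (fun u : ℝ => u + s) :=
    (MeasurableEquiv.addRight s).measurableEmbedding
  have := hmp.setLIntegral_comp_preimage_emb hemb (fun t => g (t - s)) (Ioo s T)
  have hpre : (fun u : ℝ => u + s) ⁻¹' Ioo s T = Ioo 0 (T - s) := by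
    ext u
    simp only [mem_preimage, mem_Ioo]
    constructor <;> rintro ⟨h1, h2⟩ <;> constructor <;> linarith
  rw [hpre] at this
  rw [← this]
  refine lintegral_congr fun u => ?_
  simp

lemma aux_reflect {g : ℝ → ℝ≥0∞} (hg : Measurable g) :
    ∫⁻ σ in Ioo (0:ℝ) 1, g (1 - σ) = ∫⁻ u in Ioo (0:ℝ) 1, g u := by
  have hmp : MeasurePreserving (fun u : ℝ => 1 - u) volume volume :=
    Measure.measurePreserving_sub_left volume 1
  have hemb : MeasurableEmbedding (fun u : ℝ => 1 - u) := by
    have : (fun u : ℝ => 1 - u) = (fun u : ℝ => u + 1) ∘ (fun u : ℝ => -u) := by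
      funext u; simp; ring
    rw [this]
    exact (MeasurableEquiv.addRight 1).measurableEmbedding.comp
      (MeasurableEquiv.neg ℝ).measurableEmbedding
  have := hmp.setLIntegral_comp_preimage_emb hemb g (Ioo 0 1)
  have hpre : (fun u : ℝ => 1 - u) ⁻¹' Ioo (0:ℝ) 1 = Ioo 0 1 := by
    ext u
    simp only [mem_preimage, mem_Ioo]
    constructor <;> rintro ⟨h1, h2⟩ <;> constructor <;> linarith
  rw [hpre] at this
  exact this

lemma aux_rpow_int {c r : ℝ} (hc : 0 < c) (hr : -1 < r) :
    ∫⁻ x in Ioo (0:ℝ) c, ENNReal.ofReal (x ^ r) = ENNReal.ofReal (c ^ (r + 1) / (r + 1)) := by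
  have hint : IntegrableOn (fun x : ℝ => x ^ r) (Ioo 0 c) := by
    have h1 : IntervalIntegrable (fun x : ℝ => x ^ r) volume 0 c := intervalIntegral.intervalIntegrable_rpow' hr
    have h2 : IntegrableOn (fun x : ℝ => x ^ r) (Ioc 0 c) := by
      rwa [intervalIntegrable_iff_integrableOn_Ioc_of_le hc.le] at h1
    exact h2.mono_set Ioo_subset_Ioc_self
  rw [← ofReal_integral_eq_lintegral_ofReal hint ?_]
  · congr 1
    rw [← integral_Ioc_eq_integral_Ioo, ← intervalIntegral.integral_of_le hc.le,
      integral_rpow (Or.inl hr)]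
    rw [Real.zero_rpow (by linarith : r + 1 ≠ 0)]
    ring
  · filter_upwards [ae_restrict_mem measurableSet_Ioo] with x hx
    exact Real.rpow_nonneg hx.1.le r

lemma aux_B_lt_top {α a : ℝ} (hα0 : 0 < α) (hα1 : α < 1) (ha : -1 < a) :
    (∫⁻ σ in Ioo (0:ℝ) 1, ENNReal.ofReal ((1 - σ) ^ (α - 1) * σ ^ a)) < ⊤ := by
  set C : ℝ := max 1 (2 ^ (-a)) with hC
  have hC0 : (0:ℝ) ≤ C := le_trans zero_le_one (le_max_left _ _)
  have h2α : (0:ℝ) ≤ 2 ^ (1 - α) := Real.rpow_nonneg (by norm_num) _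
  have half : ((1:ℝ)/2) ^ (α - 1) = 2 ^ (1 - α) := by
    rw [show (1:ℝ)/2 = 2⁻¹ by norm_num, Real.inv_rpow (by norm_num : (0:ℝ) ≤ 2),
      ← Real.rpow_neg (by norm_num : (0:ℝ) ≤ 2), neg_sub]
  have halfa : ((1:ℝ)/2) ^ a = 2 ^ (-a) := by
    rw [show (1:ℝ)/2 = 2⁻¹ by norm_num, Real.inv_rpow (by norm_num : (0:ℝ) ≤ 2),
      ← Real.rpow_neg (by norm_num : (0:ℝ) ≤ 2)]
  have hpt : ∀ σ ∈ Ioo (0:ℝ) 1,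
      (1 - σ) ^ (α - 1) * σ ^ a ≤ 2 ^ (1 - α) * σ ^ a + C * (1 - σ) ^ (α - 1) := by
    intro σ hσ
    have hσ0 : 0 < σ := hσ.1
    have hσ1 : σ < 1 := hσ.2
    have h1σ : 0 < 1 - σ := by linarith
    rcases le_or_gt σ (1/2) with hhalf | hhalf
    · have h1 : (1 - σ) ^ (α - 1) ≤ ((1:ℝ)/2) ^ (α - 1) :=
        Real.rpow_le_rpow_of_nonpos (by norm_num) (by linarith) (by linarith)
      have h2 : (1 - σ) ^ (α - 1) * σ ^ a ≤ 2 ^ (1 - α) * σ ^ a := by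
        rw [← half]
        exact mul_le_mul_of_nonneg_right h1 (Real.rpow_nonneg hσ0.le a)
      have h3 : 0 ≤ C * (1 - σ) ^ (α - 1) := mul_nonneg hC0 (Real.rpow_nonneg h1σ.le _)
      linarith
    · have hσa : σ ^ a ≤ C := by
        rcases le_or_gt 0 a with haa | haa
        · exact le_trans (Real.rpow_le_one hσ0.le hσ1.le haa) (le_max_left _ _)
        · refine le_trans ?_ (le_max_right _ _)
          rw [← halfa]
          exact Real.rpow_le_rpow_of_nonpos (by norm_num) (by linarith) haa.le
      have h2 : (1 - σ) ^ (α - 1) * σ ^ a ≤ C * (1 - σ) ^ (α - 1) := by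
        rw [mul_comm]
        exact mul_le_mul_of_nonneg_right hσa (Real.rpow_nonneg h1σ.le _)
      have h3 : 0 ≤ 2 ^ (1 - α) * σ ^ a := mul_nonneg h2α (Real.rpow_nonneg hσ0.le _)
      linarith
  have hmeas1 : Measurable fun σ : ℝ => ENNReal.ofReal (2 ^ (1 - α) * σ ^ a) :=
    ((measurable_id.pow measurable_const).const_mul _).ennreal_ofReal
  calc (∫⁻ σ in Ioo (0:ℝ) 1, ENNReal.ofReal ((1 - σ) ^ (α - 1) * σ ^ a))
      ≤ ∫⁻ σ in Ioo (0:ℝ) 1,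
          (ENNReal.ofReal (2 ^ (1 - α) * σ ^ a) + ENNReal.ofReal (C * (1 - σ) ^ (α - 1))) := by
        refine lintegral_mono_ae ?_
        filter_upwards [ae_restrict_mem measurableSet_Ioo] with σ hσ
        calc ENNReal.ofReal ((1 - σ) ^ (α - 1) * σ ^ a)
            ≤ ENNReal.ofReal (2 ^ (1 - α) * σ ^ a + C * (1 - σ) ^ (α - 1)) :=
              ENNReal.ofReal_le_ofReal (hpt σ hσ)
          _ ≤ _ := ENNReal.ofReal_add_le
    _ = (∫⁻ σ in Ioo (0:ℝ) 1, ENNReal.ofReal (2 ^ (1 - α) * σ ^ a))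
        + ∫⁻ σ in Ioo (0:ℝ) 1, ENNReal.ofReal (C * (1 - σ) ^ (α - 1)) :=
        lintegral_add_left hmeas1 _
    _ < ⊤ := by
        have e1 : (∫⁻ σ in Ioo (0:ℝ) 1, ENNReal.ofReal (2 ^ (1 - α) * σ ^ a))
            = ENNReal.ofReal (2 ^ (1 - α)) * ∫⁻ σ in Ioo (0:ℝ) 1, ENNReal.ofReal (σ ^ a) := by
          rw [← lintegral_const_mul' _ _ ENNReal.ofReal_ne_top]
          refine lintegral_congr fun σ => ?_
          rw [← ENNReal.ofReal_mul h2α]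
        have e2 : (∫⁻ σ in Ioo (0:ℝ) 1, ENNReal.ofReal (C * (1 - σ) ^ (α - 1)))
            = ENNReal.ofReal C * ∫⁻ u in Ioo (0:ℝ) 1, ENNReal.ofReal (u ^ (α - 1)) := by
          rw [← aux_reflect (g := fun u => ENNReal.ofReal (u ^ (α - 1)))
            (measurable_id.pow measurable_const).ennreal_ofReal,
            ← lintegral_const_mul' _ _ ENNReal.ofReal_ne_top]
          refine lintegral_congr fun σ => ?_
          rw [← ENNReal.ofReal_mul hC0]
        rw [e1, e2, aux_rpow_int one_pos ha, aux_rpow_int one_pos (by linarith : -1 < α - 1)]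
        exact ENNReal.add_lt_top.2 ⟨ENNReal.mul_lt_top ENNReal.ofReal_lt_top ENNReal.ofReal_lt_top,
          ENNReal.mul_lt_top ENNReal.ofReal_lt_top ENNReal.ofReal_lt_top⟩

lemma aux_holder_pointwise {α q μ a p : ℝ} (hq : 1 < q) (hp : p = q / (q - 1))
    (haq : a * (q - 1) = -μ) {x s F : ℝ} (hx : 0 < x) (hs : 0 < s) (hF : 0 ≤ F) :
    (x ^ (α - 1) * s ^ a) ^ (1/p) * (x ^ (α - 1) * (F ^ q * s ^ μ)) ^ (1/q)
      = x ^ (α - 1) * F := by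
  have hq0 : (0:ℝ) < q := by linarith
  have hq1 : (0:ℝ) < q - 1 := by linarith
  have h1p : 1/p = (q - 1)/q := by rw [hp]; rw [one_div_div]
  have e1 : (α - 1) * (1/p) + (α - 1) * (1/q) = α - 1 := by
    rw [h1p]; field_simp; ring
  have e2 : a * (1/p) + μ * (1/q) = 0 := by
    rw [h1p]
    field_simp
    nlinarith [haq]
  have e3 : q * (1/q) = 1 := by field_simp
  rcases eq_or_lt_of_le hF with hF0 | hF0
  · rw [← hF0]
    simp [Real.zero_rpow (ne_of_gt hq0), Real.zero_rpow (show (1:ℝ)/q ≠ 0 by positivity)]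
    exact Or.inr (Real.zero_rpow (by positivity))
  · have hxa : (0:ℝ) < x ^ (α - 1) := Real.rpow_pos_of_pos hx _
    have hsa : (0:ℝ) < s ^ a := Real.rpow_pos_of_pos hs _
    have hsμ : (0:ℝ) < s ^ μ := Real.rpow_pos_of_pos hs _
    have hFq : (0:ℝ) < F ^ q := Real.rpow_pos_of_pos hF0 _
    rw [Real.mul_rpow hxa.le hsa.le, Real.mul_rpow hxa.le (by positivity),
      Real.mul_rpow hFq.le hsμ.le,
      ← Real.rpow_mul hx.le, ← Real.rpow_mul hs.le, ← Real.rpow_mul hx.le,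
      ← Real.rpow_mul hF0.le, ← Real.rpow_mul hs.le]
    calc x ^ ((α-1) * (1/p)) * s ^ (a * (1/p)) *
          (x ^ ((α-1) * (1/q)) * (F ^ (q * (1/q)) * s ^ (μ * (1/q))))
        = (x ^ ((α-1) * (1/p)) * x ^ ((α-1) * (1/q))) *
          ((s ^ (a * (1/p)) * s ^ (μ * (1/q))) * F ^ (q * (1/q))) := by ring
      _ = x ^ (α - 1) * F := by
          rw [← Real.rpow_add hx, ← Real.rpow_add hs, e1, e2, e3, Real.rpow_zero,
            Real.rpow_one, one_mul]

/-- Boundedness of `I^α` on weighted `L_q(0,T)` with constant `N(α,q,μ) T^{αq}`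
(in the `q`-th power form). -/
theorem stmt_5 (α q μ : ℝ) (hα : α ∈ Ioo (0:ℝ) 1) (hq : 1 < q)
    (hμ : μ ∈ Ioo (-1 : ℝ) (q - 1)) :
    ∃ N : ℝ, 0 < N ∧ ∀ T : ℝ, 0 < T → ∀ f : ℝ → ℝ, Measurable f →
      (∫⁻ t in Ioo (0:ℝ) T, ENNReal.ofReal (|f t| ^ q * t ^ μ)) < ⊤ →
      (∫⁻ t in Ioo (0:ℝ) T,
          ENNReal.ofReal
            (|(Real.Gamma α)⁻¹ * ∫ s in Ioo (0:ℝ) t, (t - s) ^ (α - 1) * f s| ^ q * t ^ μ)) ≤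
        ENNReal.ofReal (N * T ^ (α * q)) *
          ∫⁻ t in Ioo (0:ℝ) T, ENNReal.ofReal (|f t| ^ q * t ^ μ) := by
  obtain ⟨hα0, hα1⟩ := hα
  obtain ⟨hμ1, hμ2⟩ := hμ
  have hq0 : (0:ℝ) < q := by linarith
  have hq1 : (0:ℝ) < q - 1 := by linarith
  set a : ℝ := -μ / (q - 1) with ha_def
  have ha : -1 < a := by
    rw [ha_def, lt_div_iff₀ hq1]; linarith
  have haq : a * (q - 1) = -μ := by
    rw [ha_def]; field_simp
  set p : ℝ := q / (q - 1) with hp_def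
  have hpq : p.HolderConjugate q := by
    rw [Real.holderConjugate_iff]; constructor
    · rw [hp_def, lt_div_iff₀ hq1]; linarith
    · rw [hp_def, inv_div]; field_simp; ring
  have h1p : 1/p = (q-1)/q := by rw [hp_def, one_div_div]
  have hΓ : 0 < Real.Gamma α := Real.Gamma_pos_of_pos hα0
  set c : ℝ := (Real.Gamma α)⁻¹ with hc_def
  have hc : 0 < c := inv_pos.2 hΓ
  set B : ℝ≥0∞ := ∫⁻ σ in Ioo (0:ℝ) 1, ENNReal.ofReal ((1 - σ) ^ (α - 1) * σ ^ a) with hB_def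
  have hB : B < ⊤ := aux_B_lt_top hα0 hα1 ha
  refine ⟨c ^ q * B.toReal ^ (q - 1) * α⁻¹ + 1, by positivity, ?_⟩
  intro T hT f hf _
  set G : ℝ → ℝ≥0∞ := fun s => ENNReal.ofReal (|f s| ^ q * s ^ μ) with hG_def
  have hGmeas : Measurable G :=
    (((hf.abs).pow measurable_const).mul (measurable_id.pow measurable_const)).ennreal_ofReal
  have hGtop : ∀ s, G s ≠ ⊤ := fun s => ENNReal.ofReal_ne_top
  set K : ℝ≥0∞ := ENNReal.ofReal (c ^ q) *
      (B ^ (q - 1) * ENNReal.ofReal (T ^ (α * (q - 1)))) with hK_def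
  have hKtop : K ≠ ⊤ := by
    refine ENNReal.mul_ne_top ENNReal.ofReal_ne_top (ENNReal.mul_ne_top ?_ ENNReal.ofReal_ne_top)
    exact ENNReal.rpow_ne_top_of_nonneg (by linarith) hB.ne
  -- pointwise bound
  have hpoint : ∀ t ∈ Ioo (0:ℝ) T,
      ENNReal.ofReal (|c * ∫ s in Ioo (0:ℝ) t, (t - s) ^ (α - 1) * f s| ^ q * t ^ μ)
        ≤ K * ∫⁻ s in Ioo (0:ℝ) t, ENNReal.ofReal ((t - s) ^ (α - 1)) * G s := by
    intro t ht
    obtain ⟨ht0, htT⟩ := ht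
    set I : ℝ := ∫ s in Ioo (0:ℝ) t, (t - s) ^ (α - 1) * f s with hI_def
    set V : ℝ≥0∞ := ∫⁻ s in Ioo (0:ℝ) t, ENNReal.ofReal ((t - s) ^ (α - 1)) * G s with hV_def
    set U : ℝ≥0∞ := ∫⁻ s in Ioo (0:ℝ) t, ENNReal.ofReal ((t - s) ^ (α - 1) * |f s|) with hU_def
    set E : ℝ≥0∞ := ∫⁻ s in Ioo (0:ℝ) t, ENNReal.ofReal ((t - s) ^ (α - 1) * s ^ a) with hE_def
    have stepA : ENNReal.ofReal (|c * I| ^ q * t ^ μ)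
        = ENNReal.ofReal (c ^ q) * (ENNReal.ofReal |I|) ^ q * ENNReal.ofReal (t ^ μ) := by
      rw [abs_mul, abs_of_pos hc, Real.mul_rpow hc.le (abs_nonneg _),
        ENNReal.ofReal_mul (by positivity), ENNReal.ofReal_mul (by positivity),
        ENNReal.ofReal_rpow_of_nonneg (abs_nonneg _) hq0.le]
    have stepB : ENNReal.ofReal |I| ≤ U := by
      refine le_trans (aux_ofReal_abs_integral_le _ _) (le_of_eq ?_)
      refine setLIntegral_congr_fun measurableSet_Ioo (fun s hs => ?_)
      rw [abs_mul, abs_of_pos (Real.rpow_pos_of_pos (by linarith [hs.2] : (0:ℝ) < t - s) _)]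
    have stepC : U ≤ E ^ (1/p) * V ^ (1/q) := by
      set F1 : ℝ → ℝ≥0∞ := fun s => ENNReal.ofReal ((t - s) ^ (α - 1) * s ^ a) ^ (1/p) with hF1
      set F2 : ℝ → ℝ≥0∞ := fun s => (ENNReal.ofReal ((t - s) ^ (α - 1)) * G s) ^ (1/q) with hF2
      have hF1m : AEMeasurable F1 (volume.restrict (Ioo (0:ℝ) t)) :=
        (((((measurable_const.sub measurable_id).pow measurable_const).mul
          (measurable_id.pow measurable_const)).ennreal_ofReal).pow
          measurable_const).aemeasurable
      have hF2m : AEMeasurable F2 (volume.restrict (Ioo (0:ℝ) t)) :=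
        (((((measurable_const.sub measurable_id).pow measurable_const).ennreal_ofReal).mul
          hGmeas).pow measurable_const).aemeasurable
      have hU_eq : U = ∫⁻ s in Ioo (0:ℝ) t, (F1 * F2) s := by
        refine setLIntegral_congr_fun measurableSet_Ioo (fun s hs => ?_)
        obtain ⟨hs0, hst⟩ := hs
        have hts : (0:ℝ) < t - s := by linarith
        have hx1 : (0:ℝ) ≤ (t - s) ^ (α - 1) * s ^ a := by positivity
        have hx2 : (0:ℝ) ≤ (t - s) ^ (α - 1) * (|f s| ^ q * s ^ μ) := by positivity
        have h1p_nonneg : (0:ℝ) ≤ 1/p := by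
          rw [h1p]; exact div_nonneg (by linarith) (by linarith)
        have h1q_nonneg : (0:ℝ) ≤ 1/q := by
          exact div_nonneg zero_le_one (by linarith)
        simp only [Pi.mul_apply, hF1, hF2, hG_def]
        rw [← ENNReal.ofReal_mul (Real.rpow_nonneg hts.le _),
          ENNReal.ofReal_rpow_of_nonneg hx1 h1p_nonneg,
          ENNReal.ofReal_rpow_of_nonneg hx2 h1q_nonneg,
          ← ENNReal.ofReal_mul (Real.rpow_nonneg hx1 _),
          aux_holder_pointwise hq hp_def haq hts hs0 (abs_nonneg (f s))]
      have hEp : (∫⁻ s in Ioo (0:ℝ) t, F1 s ^ p) = E := by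
        refine lintegral_congr fun s => ?_
        rw [hF1, ← ENNReal.rpow_mul, one_div, inv_mul_cancel₀ hpq.ne_zero, ENNReal.rpow_one]
      have hVq : (∫⁻ s in Ioo (0:ℝ) t, F2 s ^ q) = V := by
        refine lintegral_congr fun s => ?_
        rw [hF2, ← ENNReal.rpow_mul, one_div, inv_mul_cancel₀ hq0.ne', ENNReal.rpow_one]
      have hhold := ENNReal.lintegral_mul_le_Lp_mul_Lq (volume.restrict (Ioo (0:ℝ) t))
        hpq hF1m hF2m
      rw [hU_eq]
      rw [hEp, hVq] at hhold
      exact hhold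
    have stepD : E = ENNReal.ofReal (t ^ (α + a)) * B := by
      have hmeasg : Measurable fun s => ENNReal.ofReal ((t - s) ^ (α - 1) * s ^ a) :=
        (((measurable_const.sub measurable_id).pow measurable_const).mul
          (measurable_id.pow measurable_const)).ennreal_ofReal
      have hptw : ∀ σ ∈ Ioo (0:ℝ) 1,
          ENNReal.ofReal ((t - t * σ) ^ (α - 1) * (t * σ) ^ a)
            = ENNReal.ofReal (t ^ (α - 1 + a)) * ENNReal.ofReal ((1 - σ) ^ (α - 1) * σ ^ a) := by
        intro σ hσ
        obtain ⟨h0, h1⟩ := hσ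
        have h1σ : (0:ℝ) < 1 - σ := by linarith
        rw [show t - t * σ = t * (1 - σ) by ring, Real.mul_rpow ht0.le h1σ.le,
          Real.mul_rpow ht0.le h0.le,
          show t ^ (α-1) * (1-σ) ^ (α-1) * (t ^ a * σ ^ a)
            = (t ^ (α-1) * t ^ a) * ((1-σ) ^ (α-1) * σ ^ a) by ring,
          ← Real.rpow_add ht0, ENNReal.ofReal_mul (Real.rpow_nonneg ht0.le _)]
      rw [hE_def, aux_scale ht0 hmeasg,
        setLIntegral_congr_fun measurableSet_Ioo hptw,
        lintegral_const_mul' _ _ ENNReal.ofReal_ne_top, ← hB_def, ← mul_assoc,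
        ← ENNReal.ofReal_mul ht0.le]
      have httt : t * t ^ (α - 1 + a) = t ^ (α + a) := by
        nth_rewrite 1 [← Real.rpow_one t]
        rw [← Real.rpow_add ht0]
        congr 1
        ring
      rw [httt]
    have hpe1 : (1/p) * q = q - 1 := by rw [h1p]; field_simp
    have hpe2 : (1/q) * q = 1 := by field_simp
    have h2 : (ENNReal.ofReal |I|) ^ q ≤ E ^ (q-1) * V := by
      refine le_trans (ENNReal.rpow_le_rpow (stepB.trans stepC) hq0.le) (le_of_eq ?_)
      rw [ENNReal.mul_rpow_of_nonneg _ _ hq0.le, ← ENNReal.rpow_mul, ← ENNReal.rpow_mul,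
        hpe1, hpe2, ENNReal.rpow_one]
    have h3 : E ^ (q-1) = ENNReal.ofReal (t ^ ((α+a)*(q-1))) * B ^ (q-1) := by
      rw [stepD, ENNReal.mul_rpow_of_nonneg _ _ (by linarith : (0:ℝ) ≤ q - 1)]
      congr 1
      rw [Real.rpow_mul ht0.le,
        ENNReal.ofReal_rpow_of_nonneg (Real.rpow_nonneg ht0.le _) (by linarith : (0:ℝ) ≤ q - 1)]
    have h4 : ENNReal.ofReal (t ^ ((α+a)*(q-1))) * ENNReal.ofReal (t ^ μ)
        = ENNReal.ofReal (t ^ (α*(q-1))) := by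
      rw [← ENNReal.ofReal_mul (Real.rpow_nonneg ht0.le _), ← Real.rpow_add ht0]
      congr 2
      linear_combination haq
    calc ENNReal.ofReal (|c * I| ^ q * t ^ μ)
        = ENNReal.ofReal (c ^ q) * (ENNReal.ofReal |I|) ^ q * ENNReal.ofReal (t ^ μ) := stepA
      _ ≤ ENNReal.ofReal (c ^ q) * (E ^ (q-1) * V) * ENNReal.ofReal (t ^ μ) := by gcongr
      _ = ENNReal.ofReal (c ^ q) *
          (B ^ (q-1) * (ENNReal.ofReal (t ^ (α*(q-1))) * V)) := by
          rw [h3, ← h4]; ring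
      _ ≤ ENNReal.ofReal (c ^ q) *
          (B ^ (q-1) * (ENNReal.ofReal (T ^ (α*(q-1))) * V)) := by
          gcongr
      _ = K * V := by rw [hK_def]; ring
  -- Fubini bound
  have hfub : (∫⁻ t in Ioo (0:ℝ) T,
        ∫⁻ s in Ioo (0:ℝ) t, ENNReal.ofReal ((t - s) ^ (α - 1)) * G s)
      ≤ ENNReal.ofReal (T ^ α / α) * ∫⁻ s in Ioo (0:ℝ) T, G s := by
    set k : ℝ × ℝ → ℝ≥0∞ :=
      fun z => if z.2 < z.1 then ENNReal.ofReal ((z.1 - z.2) ^ (α - 1)) else 0 with hk_def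
    have hkmeas : Measurable k :=
      Measurable.ite (measurableSet_lt measurable_snd measurable_fst)
        ((measurable_fst.sub measurable_snd).pow measurable_const).ennreal_ofReal
        measurable_const
    have step1 : ∀ t ∈ Ioo (0:ℝ) T,
        (∫⁻ s in Ioo (0:ℝ) t, ENNReal.ofReal ((t - s) ^ (α - 1)) * G s)
          = ∫⁻ s in Ioo (0:ℝ) T, k (t, s) * G s := by
      intro t ht
      have he : (fun s => k (t, s) * G s)
          = (Iio t).indicator (fun s => ENNReal.ofReal ((t - s) ^ (α - 1)) * G s) := by
        funext s
        by_cases hst : s < t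
        · simp [hk_def, hst, indicator_of_mem (mem_Iio.2 hst)]
        · simp [hk_def, hst, indicator_of_notMem (fun h => hst (mem_Iio.1 h))]
      have hset : Iio t ∩ Ioo (0:ℝ) T = Ioo 0 t := by
        ext x
        simp only [mem_inter_iff, mem_Iio, mem_Ioo]
        constructor
        · rintro ⟨h1, h2, h3⟩; exact ⟨h2, h1⟩
        · rintro ⟨h1, h2⟩; exact ⟨h2, h1, by linarith [ht.2]⟩
      rw [he, lintegral_indicator measurableSet_Iio, Measure.restrict_restrict measurableSet_Iio,
        hset]
    have step3 : ∀ s ∈ Ioo (0:ℝ) T,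
        (∫⁻ t in Ioo (0:ℝ) T, k (t, s) * G s) ≤ ENNReal.ofReal (T ^ α / α) * G s := by
      intro s hs
      have he : (fun t => k (t, s) * G s)
          = fun t => (Ioi s).indicator (fun t' => ENNReal.ofReal ((t' - s) ^ (α - 1))) t * G s := by
        funext t
        by_cases hst : s < t
        · simp [hk_def, hst, indicator_of_mem (mem_Ioi.2 hst)]
        · simp [hk_def, hst, indicator_of_notMem (fun h => hst (mem_Ioi.1 h))]
      have hset : Ioi s ∩ Ioo (0:ℝ) T = Ioo s T := by
        ext x
        simp only [mem_inter_iff, mem_Ioi, mem_Ioo]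
        constructor
        · rintro ⟨h1, h2, h3⟩; exact ⟨h1, h3⟩
        · rintro ⟨h1, h2⟩; exact ⟨h1, by linarith [hs.1], h2⟩
      rw [he, lintegral_mul_const' _ _ (hGtop s), lintegral_indicator measurableSet_Ioi,
        Measure.restrict_restrict measurableSet_Ioi, hset,
        aux_translate s T (g := fun u => ENNReal.ofReal (u ^ (α - 1)))
          ((measurable_id.pow measurable_const).ennreal_ofReal),
        aux_rpow_int (by linarith [hs.2] : (0:ℝ) < T - s) (by linarith : -1 < α - 1),
        show α - 1 + 1 = α by ring]
      refine mul_le_mul_left (ENNReal.ofReal_le_ofReal ?_) _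
      have h1 : (T - s) ^ α ≤ T ^ α :=
        Real.rpow_le_rpow (by linarith [hs.2]) (by linarith [hs.1]) hα0.le
      exact div_le_div_of_nonneg_right h1 hα0.le
    calc (∫⁻ t in Ioo (0:ℝ) T, ∫⁻ s in Ioo (0:ℝ) t, ENNReal.ofReal ((t - s) ^ (α - 1)) * G s)
        = ∫⁻ t in Ioo (0:ℝ) T, ∫⁻ s in Ioo (0:ℝ) T, k (t, s) * G s := by
          refine setLIntegral_congr_fun measurableSet_Ioo (fun t ht => ?_)
          exact step1 t ht
      _ = ∫⁻ s in Ioo (0:ℝ) T, ∫⁻ t in Ioo (0:ℝ) T, k (t, s) * G s := by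
          exact lintegral_lintegral_swap
            (hkmeas.mul (hGmeas.comp measurable_snd)).aemeasurable
      _ ≤ ∫⁻ s in Ioo (0:ℝ) T, ENNReal.ofReal (T ^ α / α) * G s := by
          refine lintegral_mono_ae ?_
          filter_upwards [ae_restrict_mem measurableSet_Ioo] with s hs
          exact step3 s hs
      _ = ENNReal.ofReal (T ^ α / α) * ∫⁻ s in Ioo (0:ℝ) T, G s :=
          lintegral_const_mul' _ _ ENNReal.ofReal_ne_top
  -- final assembly
  have hBr : B ^ (q-1) = ENNReal.ofReal (B.toReal ^ (q-1)) := by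
    rw [← ENNReal.ofReal_rpow_of_nonneg ENNReal.toReal_nonneg (by linarith : (0:ℝ) ≤ q - 1),
      ENNReal.ofReal_toReal hB.ne]
  have hKN : K * ENNReal.ofReal (T ^ α / α)
      ≤ ENNReal.ofReal ((c ^ q * B.toReal ^ (q - 1) * α⁻¹ + 1) * T ^ (α * q)) := by
    rw [hK_def, hBr, ← ENNReal.ofReal_mul (by positivity), ← ENNReal.ofReal_mul (by positivity),
      ← ENNReal.ofReal_mul (by positivity)]
    refine ENNReal.ofReal_le_ofReal ?_
    have hTq : T ^ (α*(q-1)) * T ^ α = T ^ (α*q) := by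
      rw [← Real.rpow_add hT]; congr 1; ring
    calc c ^ q * (B.toReal ^ (q-1) * T ^ (α*(q-1))) * (T ^ α / α)
        = (c ^ q * B.toReal ^ (q-1) * α⁻¹) * (T ^ (α*(q-1)) * T ^ α) := by
          rw [div_eq_mul_inv]; ring
      _ = (c ^ q * B.toReal ^ (q-1) * α⁻¹) * T ^ (α*q) := by rw [hTq]
      _ ≤ (c ^ q * B.toReal ^ (q-1) * α⁻¹ + 1) * T ^ (α*q) := by
          refine mul_le_mul_of_nonneg_right (by linarith) (Real.rpow_nonneg hT.le _)
  calc (∫⁻ t in Ioo (0:ℝ) T,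
        ENNReal.ofReal (|c * ∫ s in Ioo (0:ℝ) t, (t - s) ^ (α - 1) * f s| ^ q * t ^ μ))
      ≤ ∫⁻ t in Ioo (0:ℝ) T,
          K * ∫⁻ s in Ioo (0:ℝ) t, ENNReal.ofReal ((t - s) ^ (α - 1)) * G s := by
        refine lintegral_mono_ae ?_
        filter_upwards [ae_restrict_mem measurableSet_Ioo] with t ht
        exact hpoint t ht
    _ = K * ∫⁻ t in Ioo (0:ℝ) T,
          ∫⁻ s in Ioo (0:ℝ) t, ENNReal.ofReal ((t - s) ^ (α - 1)) * G s :=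
        lintegral_const_mul' _ _ hKtop
    _ ≤ K * (ENNReal.ofReal (T ^ α / α) * ∫⁻ s in Ioo (0:ℝ) T, G s) := by gcongr
    _ = (K * ENNReal.ofReal (T ^ α / α)) * ∫⁻ s in Ioo (0:ℝ) T, G s := by ring
    _ ≤ ENNReal.ofReal ((c ^ q * B.toReal ^ (q - 1) * α⁻¹ + 1) * T ^ (α * q)) *
          ∫⁻ s in Ioo (0:ℝ) T, G s := mul_le_mul_left hKN _
end

section
/- Let α ∈ (0,1), q ∈ (1,∞), μ ∈ (−1,q−1), and suppose α > 1/q and α > (1+μ)/q. Then for f ∈ L_q((0,T), t^μ dt) and u(t) = I^α f(t), one has the pointwise estimate |u(t)| ≤ N t^{α−(1+μ)/q} (∫₀ᵗ |f(s)|^q s^μ ds)^{1/q} for all t ∈ (0,T), with N = N(α,q,μ). In particular u(t) → 0 as t → 0+. -/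
open MeasureTheory Set

lemma beta_Ioo_integrable {b c : ℝ} (hb : -1 < b) (hc : -1 < c) :
    IntegrableOn (fun x : ℝ => (1 - x) ^ b * x ^ c) (Ioo 0 1) := by
  have hu : (0:ℝ) < ((c:ℂ)+1).re := by simp; linarith
  have hv : (0:ℝ) < ((b:ℂ)+1).re := by simp; linarith
  have h := (Complex.betaIntegral_convergent hu hv).1
  have h2 : IntegrableOn
      (fun x : ℝ => ‖(x:ℂ) ^ ((c:ℂ)+1-1) * (1 - (x:ℂ)) ^ ((b:ℂ)+1-1)‖) (Ioo 0 1) :=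
    (IntegrableOn.mono_set h.norm Ioo_subset_Ioc_self)
  refine h2.congr_fun (fun x hx => ?_) measurableSet_Ioo
  have hx0 : (0:ℝ) < x := hx.1
  have hx1 : (0:ℝ) < 1 - x := by linarith [hx.2]
  beta_reduce
  rw [norm_mul, add_sub_cancel_right, add_sub_cancel_right]
  rw [show (1 - (x:ℂ)) = (((1 - x : ℝ)):ℂ) by push_cast; ring]
  rw [Complex.norm_cpow_eq_rpow_re_of_pos hx0, Complex.norm_cpow_eq_rpow_re_of_pos hx1,
    Complex.ofReal_re, Complex.ofReal_re, mul_comm]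



lemma beta_Ioc_integrable {b c : ℝ} (hb : -1 < b) (hc : -1 < c) :
    IntegrableOn (fun x : ℝ => (1 - x) ^ b * x ^ c) (Ioc 0 1) := by
  rw [integrableOn_Ioc_iff_integrableOn_Ioo]
  exact beta_Ioo_integrable hb hc

lemma beta_scaled {b c t : ℝ} (hb : -1 < b) (hc : -1 < c) (ht : 0 < t) :
    IntegrableOn (fun s : ℝ => (t - s) ^ b * s ^ c) (Ioo 0 t) ∧
    ∫ s in Ioo (0:ℝ) t, (t - s) ^ b * s ^ c
      = t ^ (b + c + 1) * ∫ s in Ioo (0:ℝ) 1, (1 - s) ^ b * s ^ c := by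
  set g : ℝ → ℝ := fun x => (1 - x) ^ b * x ^ c with hg
  have hgI : IntervalIntegrable g volume 0 1 :=
    (intervalIntegrable_iff_integrableOn_Ioc_of_le zero_le_one).mpr
      (beta_Ioc_integrable hb hc)
  have heq : ∀ s ∈ Ioc (0:ℝ) t, (t - s) ^ b * s ^ c = t ^ (b + c) * g (s / t) := by
    intro s hs
    have hs0 : 0 ≤ s := hs.1.le
    have hst : 0 ≤ t - s := by linarith [hs.2]
    have e1 : (1 - s / t) = (t - s) / t := by field_simp
    simp only [hg, e1, Real.div_rpow hst ht.le, Real.div_rpow hs0 ht.le,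
      Real.rpow_add ht]
    field_simp
  have hcomp : IntervalIntegrable (fun s : ℝ => t ^ (b + c) * g (t⁻¹ * s)) volume 0 t := by
    have := (hgI.comp_mul_left (c := t⁻¹)).const_mul (t ^ (b + c))
    simpa [div_eq_mul_inv, ht.ne'] using this
  have hint : IntegrableOn (fun s : ℝ => (t - s) ^ b * s ^ c) (Ioc 0 t) := by
    refine ((intervalIntegrable_iff_integrableOn_Ioc_of_le ht.le).mp hcomp).congr_fun
      (fun s hs => ?_) measurableSet_Ioc
    rw [heq s hs]
    beta_reduce
    rw [inv_mul_eq_div]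
  constructor
  · exact hint.mono_set Ioo_subset_Ioc_self
  · rw [← integral_Ioc_eq_integral_Ioo, ← integral_Ioc_eq_integral_Ioo,
      setIntegral_congr_fun measurableSet_Ioc heq, integral_const_mul,
      ← intervalIntegral.integral_of_le ht.le,
      intervalIntegral.integral_comp_div (f := g) ht.ne', zero_div, div_self ht.ne',
      intervalIntegral.integral_of_le zero_le_one, integral_Ioc_eq_integral_Ioo,
      smul_eq_mul, Real.rpow_add ht, Real.rpow_add ht, Real.rpow_one, Real.rpow_add ht]
    ring



/-- Pointwise estimate `|I^α f(t)| ≤ N t^{α−(1+μ)/q} (∫₀ᵗ |f|^q s^μ ds)^{1/q}` when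
`α > 1/q` and `α > (1+μ)/q`; in particular `I^α f(t) → 0` as `t → 0+`. -/
theorem stmt_6 (α q μ : ℝ) (hα : α ∈ Ioo (0:ℝ) 1) (hq : 1 < q)
    (hμ : μ ∈ Ioo (-1:ℝ) (q-1)) (h1 : 1/q < α) (h2 : (1+μ)/q < α) :
    ∃ N : ℝ, 0 < N ∧ ∀ T : ℝ, 0 < T → ∀ f : ℝ → ℝ, Measurable f →
      IntegrableOn (fun s => |f s| ^ q * s ^ μ) (Ioo 0 T) →
      (∀ t ∈ Ioo (0:ℝ) T,
        |(Real.Gamma α)⁻¹ * ∫ s in Ioo (0:ℝ) t, (t - s) ^ (α - 1) * f s| ≤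
          N * t ^ (α - (1+μ)/q) * (∫ s in Ioo (0:ℝ) t, |f s| ^ q * s ^ μ) ^ (1/q)) ∧
      Filter.Tendsto
        (fun t => (Real.Gamma α)⁻¹ * ∫ s in Ioo (0:ℝ) t, (t - s) ^ (α - 1) * f s)
        (nhdsWithin 0 (Ioi 0)) (nhds 0) := by
  have hq0 : (0:ℝ) < q := lt_trans one_pos hq
  have hq1 : (0:ℝ) < q - 1 := by linarith
  set p : ℝ := q / (q - 1) with hp_def
  have hp1 : 1 < p := by rw [hp_def, lt_div_iff₀ hq1]; linarith
  have hp0 : 0 < p := lt_trans one_pos hp1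
  have hpq : p.HolderConjugate q := (Real.HolderConjugate.conjExponent hq).symm
  set b : ℝ := (α - 1) * p with hb_def
  set c : ℝ := (-(μ / q)) * p with hc_def
  have hαq : 1 < α * q := by rwa [div_lt_iff₀ hq0] at h1
  have hb : -1 < b := by
    rw [hb_def, hp_def, mul_div_assoc', lt_div_iff₀ hq1]
    nlinarith
  have hc : -1 < c := by
    have : c = -μ / (q - 1) := by rw [hc_def, hp_def]; field_simp
    rw [this, lt_div_iff₀ hq1]
    linarith [hμ.2]
  set γ : ℝ := α - (1 + μ) / q with hγ_def
  have hγ : 0 < γ := by rw [hγ_def]; linarith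
  have hbc : (b + c + 1) * (1 / p) = γ := by
    rw [hb_def, hc_def, hγ_def, hp_def]
    field_simp
    ring
  set B : ℝ := ∫ s in Ioo (0:ℝ) 1, (1 - s) ^ b * s ^ c with hB_def
  have hB0 : 0 ≤ B := by
    refine setIntegral_nonneg measurableSet_Ioo fun s hs => ?_
    exact mul_nonneg (Real.rpow_nonneg (by linarith [hs.2]) _)
      (Real.rpow_nonneg hs.1.le _)
  have hGa : 0 < Real.Gamma α := Real.Gamma_pos_of_pos hα.1
  set N : ℝ := (Real.Gamma α)⁻¹ * B ^ (1 / p) + 1 with hN_def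
  have hN : 0 < N := by
    have : 0 ≤ (Real.Gamma α)⁻¹ * B ^ (1 / p) :=
      mul_nonneg (inv_nonneg.mpr hGa.le) (Real.rpow_nonneg hB0 _)
    show 0 < (Real.Gamma α)⁻¹ * B ^ (1 / p) + 1
    linarith
  refine ⟨N, hN, fun T hT f hf hintf => ?_⟩
  -- the pointwise bound
  have key : ∀ t ∈ Ioo (0:ℝ) T,
      |(Real.Gamma α)⁻¹ * ∫ s in Ioo (0:ℝ) t, (t - s) ^ (α - 1) * f s| ≤
        N * t ^ γ * (∫ s in Ioo (0:ℝ) t, |f s| ^ q * s ^ μ) ^ (1/q) := by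
    intro t ht
    obtain ⟨ht0, htT⟩ := ht
    set G : ℝ → ℝ := fun s => (t - s) ^ (α - 1) * s ^ (-(μ / q)) with hG_def
    set H : ℝ → ℝ := fun s => |f s| * s ^ (μ / q) with hH_def
    have hGm : Measurable G := by fun_prop
    have hHm : Measurable H := by fun_prop
    have hAp : ENNReal.ofReal p ≠ 0 := by
      simp [ENNReal.ofReal_eq_zero, not_le, hp0]
    have hAq : ENNReal.ofReal q ≠ 0 := by
      simp [ENNReal.ofReal_eq_zero, not_le, hq0]
    have hint_t : IntegrableOn (fun s => |f s| ^ q * s ^ μ) (Ioo 0 t) :=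
      hintf.mono_set (Ioo_subset_Ioo_right htT.le)
    have hGLp : MemLp G (ENNReal.ofReal p) (volume.restrict (Ioo 0 t)) := by
      rw [← memLp_norm_rpow_iff hGm.aestronglyMeasurable hAp ENNReal.ofReal_ne_top,
        ENNReal.toReal_ofReal hp0.le, ENNReal.div_self hAp ENNReal.ofReal_ne_top,
        memLp_one_iff_integrable]
      refine ((beta_scaled hb hc ht0).1).congr_fun (fun s hs => ?_) measurableSet_Ioo
      have hs0 : (0:ℝ) < s := hs.1
      have hts : (0:ℝ) < t - s := by linarith [hs.2]
      have hGnn : 0 ≤ G s :=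
        mul_nonneg (Real.rpow_nonneg hts.le _) (Real.rpow_nonneg hs0.le _)
      rw [Real.norm_eq_abs, abs_of_nonneg hGnn, hG_def]
      simp only
      rw [Real.mul_rpow (Real.rpow_nonneg hts.le _) (Real.rpow_nonneg hs0.le _),
        ← Real.rpow_mul hts.le, ← Real.rpow_mul hs0.le, ← hb_def, ← hc_def]
    have hHLq : MemLp H (ENNReal.ofReal q) (volume.restrict (Ioo 0 t)) := by
      rw [← memLp_norm_rpow_iff hHm.aestronglyMeasurable hAq ENNReal.ofReal_ne_top,
        ENNReal.toReal_ofReal hq0.le, ENNReal.div_self hAq ENNReal.ofReal_ne_top,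
        memLp_one_iff_integrable]
      refine hint_t.congr_fun (fun s hs => ?_) measurableSet_Ioo
      have hs0 : (0:ℝ) < s := hs.1
      have hHnn : 0 ≤ H s :=
        mul_nonneg (abs_nonneg _) (Real.rpow_nonneg hs0.le _)
      rw [Real.norm_eq_abs, abs_of_nonneg hHnn, hH_def]
      simp only
      rw [Real.mul_rpow (abs_nonneg _) (Real.rpow_nonneg hs0.le _),
        ← Real.rpow_mul hs0.le, div_mul_cancel₀ _ hq0.ne']
    have hGnn' : 0 ≤ᵐ[volume.restrict (Ioo 0 t)] G := by
      filter_upwards [ae_restrict_mem measurableSet_Ioo] with s hs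
      exact mul_nonneg (Real.rpow_nonneg (by linarith [hs.2]) _)
        (Real.rpow_nonneg hs.1.le _)
    have hHnn' : 0 ≤ᵐ[volume.restrict (Ioo 0 t)] H := by
      filter_upwards [ae_restrict_mem measurableSet_Ioo] with s hs
      exact mul_nonneg (abs_nonneg _) (Real.rpow_nonneg hs.1.le _)
    have holder := MeasureTheory.integral_mul_le_Lp_mul_Lq_of_nonneg hpq hGnn' hHnn' hGLp hHLq
    have hGp_int : ∫ s in Ioo (0:ℝ) t, G s ^ p = t ^ (b + c + 1) * B := by
      rw [← (beta_scaled hb hc ht0).2]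
      refine setIntegral_congr_fun measurableSet_Ioo fun s hs => ?_
      have hs0 : (0:ℝ) < s := hs.1
      have hts : (0:ℝ) < t - s := by linarith [hs.2]
      rw [hG_def]
      simp only
      rw [Real.mul_rpow (Real.rpow_nonneg hts.le _) (Real.rpow_nonneg hs0.le _),
        ← Real.rpow_mul hts.le, ← Real.rpow_mul hs0.le]
    have hHq_int : ∫ s in Ioo (0:ℝ) t, H s ^ q = ∫ s in Ioo (0:ℝ) t, |f s| ^ q * s ^ μ := by
      refine setIntegral_congr_fun measurableSet_Ioo fun s hs => ?_
      have hs0 : (0:ℝ) < s := hs.1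
      rw [hH_def]
      simp only
      rw [Real.mul_rpow (abs_nonneg _) (Real.rpow_nonneg hs0.le _),
        ← Real.rpow_mul hs0.le, div_mul_cancel₀ _ hq0.ne']
    have habs : |∫ s in Ioo (0:ℝ) t, (t - s) ^ (α - 1) * f s| ≤
        ∫ s in Ioo (0:ℝ) t, G s * H s := by
      calc |∫ s in Ioo (0:ℝ) t, (t - s) ^ (α - 1) * f s|
          ≤ ∫ s in Ioo (0:ℝ) t, ‖(t - s) ^ (α - 1) * f s‖ := by
            rw [← Real.norm_eq_abs]
            exact norm_integral_le_integral_norm _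
        _ = ∫ s in Ioo (0:ℝ) t, G s * H s := by
            refine setIntegral_congr_fun measurableSet_Ioo fun s hs => ?_
            have hs0 : (0:ℝ) < s := hs.1
            have hts : (0:ℝ) < t - s := by linarith [hs.2]
            rw [Real.norm_eq_abs, abs_mul, abs_of_nonneg (Real.rpow_nonneg hts.le _),
              hG_def, hH_def]
            simp only
            rw [show (t - s) ^ (α - 1) * s ^ (-(μ / q)) * (|f s| * s ^ (μ / q))
                = (t - s) ^ (α - 1) * |f s| * (s ^ (-(μ / q)) * s ^ (μ / q)) by ring,
              ← Real.rpow_add hs0, neg_add_cancel, Real.rpow_zero, mul_one]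
    set I : ℝ := ∫ s in Ioo (0:ℝ) t, |f s| ^ q * s ^ μ with hI_def
    have hI0 : 0 ≤ I := by
      refine setIntegral_nonneg measurableSet_Ioo fun s hs => ?_
      exact mul_nonneg (Real.rpow_nonneg (abs_nonneg _) _) (Real.rpow_nonneg hs.1.le _)
    have hmain : |∫ s in Ioo (0:ℝ) t, (t - s) ^ (α - 1) * f s| ≤
        (t ^ (b + c + 1) * B) ^ (1/p) * I ^ (1/q) := by
      refine habs.trans (holder.trans_eq ?_)
      rw [hGp_int, hHq_int]
    have hrw : (t ^ (b + c + 1) * B) ^ (1/p) = t ^ γ * B ^ (1/p) := by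
      rw [Real.mul_rpow (Real.rpow_nonneg ht0.le _) hB0, ← Real.rpow_mul ht0.le, hbc]
    rw [abs_mul, abs_of_nonneg (inv_nonneg.mpr hGa.le)]
    calc (Real.Gamma α)⁻¹ * |∫ s in Ioo (0:ℝ) t, (t - s) ^ (α - 1) * f s|
        ≤ (Real.Gamma α)⁻¹ * ((t ^ (b + c + 1) * B) ^ (1/p) * I ^ (1/q)) :=
          mul_le_mul_of_nonneg_left hmain (inv_nonneg.mpr hGa.le)
      _ = ((Real.Gamma α)⁻¹ * B ^ (1/p)) * t ^ γ * I ^ (1/q) := by rw [hrw]; ring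
      _ ≤ N * t ^ γ * I ^ (1/q) := by
          refine mul_le_mul_of_nonneg_right (mul_le_mul_of_nonneg_right ?_
            (Real.rpow_nonneg ht0.le _)) (Real.rpow_nonneg hI0 _)
          rw [hN_def]; linarith
  refine ⟨key, ?_⟩
  -- the limit
  set C : ℝ := ∫ s in Ioo (0:ℝ) T, |f s| ^ q * s ^ μ with hC_def
  have hC0 : 0 ≤ C := by
    refine setIntegral_nonneg measurableSet_Ioo fun s hs => ?_
    exact mul_nonneg (Real.rpow_nonneg (abs_nonneg _) _) (Real.rpow_nonneg hs.1.le _)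
  have hnn : 0 ≤ᵐ[volume.restrict (Ioo 0 T)] fun s => |f s| ^ q * s ^ μ := by
    filter_upwards [ae_restrict_mem measurableSet_Ioo] with s hs
    exact mul_nonneg (Real.rpow_nonneg (abs_nonneg _) _) (Real.rpow_nonneg hs.1.le _)
  have hbound : ∀ᶠ t in nhdsWithin (0:ℝ) (Ioi 0),
      ‖(Real.Gamma α)⁻¹ * ∫ s in Ioo (0:ℝ) t, (t - s) ^ (α - 1) * f s‖ ≤
        (N * C ^ (1/q)) * t ^ γ := by
    filter_upwards [Ioo_mem_nhdsGT_of_mem (⟨le_refl (0:ℝ), hT⟩ : (0:ℝ) ∈ Ico 0 T)]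
      with t ht
    have hIle : (∫ s in Ioo (0:ℝ) t, |f s| ^ q * s ^ μ) ≤ C :=
      setIntegral_mono_set hintf hnn
        ((Ioo_subset_Ioo_right ht.2.le).eventuallyLE)
    have hI0 : 0 ≤ ∫ s in Ioo (0:ℝ) t, |f s| ^ q * s ^ μ := by
      refine setIntegral_nonneg measurableSet_Ioo fun s hs => ?_
      exact mul_nonneg (Real.rpow_nonneg (abs_nonneg _) _) (Real.rpow_nonneg hs.1.le _)
    calc ‖(Real.Gamma α)⁻¹ * ∫ s in Ioo (0:ℝ) t, (t - s) ^ (α - 1) * f s‖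
        ≤ N * t ^ γ * (∫ s in Ioo (0:ℝ) t, |f s| ^ q * s ^ μ) ^ (1/q) := key t ht
      _ ≤ N * t ^ γ * C ^ (1/q) := by
          refine mul_le_mul_of_nonneg_left
            (Real.rpow_le_rpow hI0 hIle (by positivity)) ?_
          exact mul_nonneg hN.le (Real.rpow_nonneg ht.1.le _)
      _ = (N * C ^ (1/q)) * t ^ γ := by ring
  have hlim : Filter.Tendsto (fun t : ℝ => (N * C ^ (1/q)) * t ^ γ)
      (nhdsWithin (0:ℝ) (Ioi 0)) (nhds 0) := by
    have h0 : Filter.Tendsto (fun t : ℝ => t ^ γ) (nhds (0:ℝ)) (nhds ((0:ℝ) ^ γ)) :=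
      (Real.continuousAt_rpow_const 0 γ (Or.inr hγ.le)).tendsto
    rw [Real.zero_rpow hγ.ne'] at h0
    have h1' : Filter.Tendsto (fun t : ℝ => (N * C ^ (1/q)) * t ^ γ)
        (nhds (0:ℝ)) (nhds ((N * C ^ (1/q)) * 0)) := h0.const_mul _
    rw [mul_zero] at h1'
    exact h1'.mono_left nhdsWithin_le_nhds
  exact squeeze_zero_norm' hbound hlim
end

section
/- Let α ∈ (0,1), q ∈ (1,∞), μ ∈ (−1,q−1) with α ≥ (1+μ)/q. Suppose u : (0,T) → ℝ satisfies u(t) = u₀ + I^α f(t) with f ∈ L_q((0,T), t^μ dt) and u₀ ∈ ℝ. Then |u₀| ≤ N (T^{−(1+μ)/q} ‖u‖_{L_q((0,T),t^μ dt)} + T^{α−(1+μ)/q} ‖f‖_{L_q((0,T),t^μ dt)}), with N = N(α,q,μ). -/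
open MeasureTheory Set
open scoped ENNReal NNReal


lemma rpow_integrableOn {r T : ℝ} (hr : -1 < r) :
    IntegrableOn (fun s : ℝ => s ^ r) (Ioo 0 T) := by
  have h := (intervalIntegral.intervalIntegrable_rpow' (a := 0) (b := T) hr).1
  exact h.mono_set Ioo_subset_Ioc_self

lemma rpow_integral_Ioo {r T : ℝ} (hr : -1 < r) (hT : 0 < T) :
    ∫ s in Ioo (0:ℝ) T, s ^ r = T ^ (r + 1) / (r + 1) := by
  rw [← integral_Ioc_eq_integral_Ioo, ← intervalIntegral.integral_of_le hT.le,
    integral_rpow (Or.inl hr), Real.zero_rpow (by linarith)]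
  ring

lemma abs_aemeas {q μ T : ℝ} (hq : 0 < q) (v : ℝ → ℝ)
    (hv : IntegrableOn (fun t => |v t| ^ q * t ^ μ) (Ioo 0 T)) :
    AEMeasurable (fun s => |v s|) (volume.restrict (Ioo 0 T)) := by
  have hg : AEMeasurable (fun s => |v s| ^ q * s ^ μ) (volume.restrict (Ioo 0 T)) :=
    hv.aemeasurable
  have h1 : AEMeasurable (fun s => ((|v s| ^ q * s ^ μ) * s ^ (-μ)) ^ (1/q))
      (volume.restrict (Ioo 0 T)) :=
    (hg.mul ((measurable_id.pow measurable_const).aemeasurable)).pow aemeasurable_const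
  refine h1.congr ?_
  filter_upwards [ae_restrict_mem measurableSet_Ioo] with s hs
  rw [mul_assoc, ← Real.rpow_add hs.1, add_neg_cancel, Real.rpow_zero, mul_one,
    ← Real.rpow_mul (abs_nonneg _), mul_one_div_cancel hq.ne', Real.rpow_one]

lemma holder_aux {q μ T : ℝ} (hq : 1 < q) (hμ1 : -1 < μ) (hμ2 : μ < q - 1) (hT : 0 < T)
    (v : ℝ → ℝ) (hv : IntegrableOn (fun t => |v t| ^ q * t ^ μ) (Ioo 0 T)) :
    ∫⁻ s in Ioo (0:ℝ) T, ENNReal.ofReal |v s| ≤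
      ENNReal.ofReal ((∫ t in Ioo (0:ℝ) T, |v t| ^ q * t ^ μ) ^ (1/q) *
        (((q-1)/(q-1-μ)) ^ (1-1/q) * T ^ (1 - (1+μ)/q))) := by
  have hq0 : (0:ℝ) < q := by linarith
  have hq1 : (0:ℝ) < q - 1 := by linarith
  have hqm : (0:ℝ) < q - 1 - μ := by linarith
  set q' : ℝ := q / (q - 1) with hq'def
  have hq'0 : (0:ℝ) < q' := by positivity
  have hpq : q.HolderConjugate q' := by rw [hq'def]; exact Real.HolderConjugate.conjExponent hq
  have hnn : 0 ≤ᵐ[volume.restrict (Ioo (0:ℝ) T)] fun t => |v t| ^ q * t ^ μ := by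
    filter_upwards [ae_restrict_mem measurableSet_Ioo] with s hs
    have := hs.1; positivity
  have hinvq' : 1 / q' = 1 - 1/q := by rw [hq'def]; field_simp
  have hva := abs_aemeas hq0 v hv
  have hr : (-1:ℝ) < -μ/(q-1) := by rw [neg_div, neg_lt_neg_iff, div_lt_one hq1]; linarith
  have hX0 : 0 ≤ ∫ t in Ioo (0:ℝ) T, |v t| ^ q * t ^ μ :=
    setIntegral_nonneg measurableSet_Ioo fun s hs => by
      have := hs.1; positivity
  calc ∫⁻ s in Ioo (0:ℝ) T, ENNReal.ofReal |v s|
      = ∫⁻ s in Ioo (0:ℝ) T,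
          (fun s => ENNReal.ofReal (|v s| * s ^ (μ/q))) s *
          (fun s : ℝ => ENNReal.ofReal (s ^ (-(μ/q)))) s := by
        refine setLIntegral_congr_fun measurableSet_Ioo (fun s hs => ?_)
        simp only
        rw [← ENNReal.ofReal_mul (mul_nonneg (abs_nonneg _) (Real.rpow_nonneg hs.1.le _)), mul_assoc, ← Real.rpow_add hs.1,
          add_neg_cancel, Real.rpow_zero, mul_one]
    _ ≤ (∫⁻ s in Ioo (0:ℝ) T, (fun s => ENNReal.ofReal (|v s| * s ^ (μ/q))) s ^ q) ^ (1/q) *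
        (∫⁻ s in Ioo (0:ℝ) T, (fun s : ℝ => ENNReal.ofReal (s ^ (-(μ/q)))) s ^ q') ^ (1/q') := by
        refine ENNReal.lintegral_mul_le_Lp_mul_Lq _ hpq ?_ ?_
        · exact ENNReal.measurable_ofReal.comp_aemeasurable
            (hva.mul ((measurable_id.pow measurable_const).aemeasurable))
        · exact (ENNReal.measurable_ofReal.comp
            (measurable_id.pow measurable_const)).aemeasurable
    _ = (ENNReal.ofReal (∫ t in Ioo (0:ℝ) T, |v t| ^ q * t ^ μ)) ^ (1/q) *
        (ENNReal.ofReal (∫ s in Ioo (0:ℝ) T, s ^ (-μ/(q-1)))) ^ (1/q') := by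
        congr 1
        · congr 1
          rw [ofReal_integral_eq_lintegral_ofReal hv hnn]
          refine setLIntegral_congr_fun measurableSet_Ioo (fun s hs => ?_)
          simp only
          rw [ENNReal.ofReal_rpow_of_nonneg (mul_nonneg (abs_nonneg _) (Real.rpow_nonneg hs.1.le _)) hq0.le,
            Real.mul_rpow (abs_nonneg _) (Real.rpow_nonneg hs.1.le _),
            ← Real.rpow_mul hs.1.le, div_mul_cancel₀ μ hq0.ne']
        · congr 1
          have hnn2 : 0 ≤ᵐ[volume.restrict (Ioo (0:ℝ) T)] fun s : ℝ => s ^ (-μ/(q-1)) := by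
            filter_upwards [ae_restrict_mem measurableSet_Ioo] with s hs
            exact Real.rpow_nonneg hs.1.le _
          rw [ofReal_integral_eq_lintegral_ofReal (rpow_integrableOn hr) hnn2]
          refine setLIntegral_congr_fun measurableSet_Ioo (fun s hs => ?_)
          simp only
          rw [ENNReal.ofReal_rpow_of_nonneg (Real.rpow_nonneg hs.1.le _) hq'0.le,
            ← Real.rpow_mul hs.1.le]
          have eexp : -(μ/q) * q' = -μ/(q-1) := by
            rw [hq'def]; field_simp
          rw [eexp]
    _ = ENNReal.ofReal ((∫ t in Ioo (0:ℝ) T, |v t| ^ q * t ^ μ) ^ (1/q) *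
        (((q-1)/(q-1-μ)) ^ (1-1/q) * T ^ (1 - (1+μ)/q))) := by
        have hr1 : (0:ℝ) < -μ/(q-1) + 1 := by
          have : -μ/(q-1) = -(μ/(q-1)) := by ring
          rw [this]
          have : μ/(q-1) < 1 := (div_lt_one hq1).2 (by linarith)
          linarith
        rw [rpow_integral_Ioo hr hT,
          ENNReal.ofReal_rpow_of_nonneg hX0 (by positivity),
          ENNReal.ofReal_rpow_of_nonneg
            (div_nonneg (Real.rpow_pos_of_pos hT _).le hr1.le)
            (div_nonneg zero_le_one hq'0.le),
          ← ENNReal.ofReal_mul (Real.rpow_nonneg hX0 _)]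
        congr 1
        congr 1
        have e2 : (-μ/(q-1) + 1)⁻¹ = (q-1)/(q-1-μ) := by
          rw [show -μ/(q-1) + 1 = (q-1-μ)/(q-1) by field_simp; ring, inv_div]
        rw [div_eq_mul_inv, Real.mul_rpow (Real.rpow_nonneg hT.le _) (inv_nonneg.2 hr1.le),
          ← Real.rpow_mul hT.le]
        have e1 : (-μ/(q-1) + 1) * (1/q') = 1 - (1+μ)/q := by
          rw [hinvq']; field_simp; ring
        rw [e1, e2, hinvq', mul_comm]


lemma kernel_aux {α T : ℝ} (hα1 : 0 < α) (hα2 : α < 1) (hT : 0 < T) (f : ℝ → ℝ)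
    (hf : Measurable f) :
    ∫⁻ t in Ioo (T/2) T, ∫⁻ s in Ioo (0:ℝ) t, ENNReal.ofReal ((t-s)^(α-1) * |f s|) ≤
      ENNReal.ofReal (T ^ α / α) * ∫⁻ s in Ioo (0:ℝ) T, ENNReal.ofReal |f s| := by
  set Φ : ℝ → ℝ → ℝ≥0∞ :=
    fun t s => if s < t then ENNReal.ofReal ((t-s)^(α-1) * |f s|) else 0 with hΦdef
  have hΦ : Measurable (Function.uncurry Φ) := by
    apply Measurable.ite
    · exact measurableSet_lt measurable_snd measurable_fst
    · exact ENNReal.measurable_ofReal.comp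
        (((measurable_fst.sub measurable_snd).pow measurable_const).mul
          ((hf.comp measurable_snd).abs))
    · exact measurable_const
  have step1 : ∫⁻ t in Ioo (T/2) T, ∫⁻ s in Ioo (0:ℝ) t, ENNReal.ofReal ((t-s)^(α-1) * |f s|)
      = ∫⁻ t in Ioo (T/2) T, ∫⁻ s in Ioo (0:ℝ) T, Φ t s := by
    refine setLIntegral_congr_fun measurableSet_Ioo (fun t ht => ?_)
    have hset : Iio t ∩ Ioo 0 T = Ioo 0 t := by
      ext s
      simp only [mem_inter_iff, mem_Iio, mem_Ioo]
      constructor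
      · rintro ⟨h1, h2, h3⟩; exact ⟨h2, h1⟩
      · rintro ⟨h1, h2⟩; exact ⟨h2, h1, lt_of_lt_of_le h2 ht.2.le⟩
    have : ∫⁻ s in Ioo (0:ℝ) T, Φ t s
        = ∫⁻ s in Ioo (0:ℝ) T,
            (Iio t).indicator (fun s => ENNReal.ofReal ((t-s)^(α-1) * |f s|)) s := by
      refine lintegral_congr fun s => ?_
      rw [indicator_apply]
      simp only [mem_Iio, hΦdef]
    rw [this, lintegral_indicator measurableSet_Iio,
      Measure.restrict_restrict measurableSet_Iio, hset]
  rw [step1, lintegral_lintegral_swap hΦ.aemeasurable]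
  have step3 : ∀ s ∈ Ioo (0:ℝ) T,
      ∫⁻ t in Ioo (T/2) T, Φ t s ≤ ENNReal.ofReal (T ^ α / α) * ENNReal.ofReal |f s| := by
    intro s hs
    have h1 : ∫⁻ t in Ioo (T/2) T, Φ t s
        = ∫⁻ t in Ioi s ∩ Ioo (T/2) T, ENNReal.ofReal ((t-s)^(α-1) * |f s|) := by
      have : ∀ t : ℝ, Φ t s
          = (Ioi s).indicator (fun t => ENNReal.ofReal ((t-s)^(α-1) * |f s|)) t := by
        intro t
        rw [indicator_apply]
        simp only [mem_Ioi, hΦdef]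
      simp_rw [this]
      rw [lintegral_indicator measurableSet_Ioi,
        Measure.restrict_restrict measurableSet_Ioi]
    have h2 : Ioi s ∩ Ioo (T/2) T ⊆ Ioo s T := by
      rintro t ⟨h1', h2'⟩
      exact ⟨h1', h2'.2⟩
    have hint : IntegrableOn (fun t => (t-s)^(α-1)) (Ioo s T) := by
      have h := (intervalIntegral.intervalIntegrable_rpow' (a := 0) (b := T - s)
        (by linarith : (-1:ℝ) < α - 1)).comp_sub_right s
      rw [zero_add, sub_add_cancel] at h
      exact h.1.mono_set Ioo_subset_Ioc_self
    have hval : ∫ t in Ioo s T, (t-s)^(α-1) = (T-s)^α / α := by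
      rw [← integral_Ioc_eq_integral_Ioo, ← intervalIntegral.integral_of_le hs.2.le]
      have : ∫ t in s..T, (t-s)^(α-1) = ∫ x in s - s..T - s, x ^ (α-1) :=
        intervalIntegral.integral_comp_sub_right (fun x => x ^ (α-1)) s
      rw [this, sub_self, integral_rpow (Or.inl (by linarith : (-1:ℝ) < α - 1)),
        Real.zero_rpow (by linarith : α - 1 + 1 ≠ 0)]
      rw [show α - 1 + 1 = α by ring]
      ring
    calc ∫⁻ t in Ioo (T/2) T, Φ t s
        = ∫⁻ t in Ioi s ∩ Ioo (T/2) T, ENNReal.ofReal ((t-s)^(α-1) * |f s|) := h1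
      _ ≤ ∫⁻ t in Ioo s T, ENNReal.ofReal ((t-s)^(α-1) * |f s|) := lintegral_mono_set h2
      _ = ∫⁻ t in Ioo s T, ENNReal.ofReal ((t-s)^(α-1)) * ENNReal.ofReal |f s| := by
          refine setLIntegral_congr_fun measurableSet_Ioo (fun t ht => ?_)
          rw [ENNReal.ofReal_mul (Real.rpow_nonneg (by linarith [ht.1] : (0:ℝ) ≤ t - s) _)]
      _ = (∫⁻ t in Ioo s T, ENNReal.ofReal ((t-s)^(α-1))) * ENNReal.ofReal |f s| :=
          lintegral_mul_const' _ _ ENNReal.ofReal_ne_top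
      _ = ENNReal.ofReal ((T-s)^α / α) * ENNReal.ofReal |f s| := by
          rw [← ofReal_integral_eq_lintegral_ofReal hint ?_, hval]
          filter_upwards [ae_restrict_mem measurableSet_Ioo] with t ht
          exact Real.rpow_nonneg (by linarith [ht.1]) _
      _ ≤ ENNReal.ofReal (T ^ α / α) * ENNReal.ofReal |f s| := by
          have hle : (T-s)^α ≤ T^α := Real.rpow_le_rpow
            (by linarith [hs.2.le] : (0:ℝ) ≤ T - s) (by linarith [hs.1] : T - s ≤ T) hα1.le
          gcongr 
  calc ∫⁻ s in Ioo (0:ℝ) T, ∫⁻ t in Ioo (T/2) T, Φ t s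
      ≤ ∫⁻ s in Ioo (0:ℝ) T, ENNReal.ofReal (T ^ α / α) * ENNReal.ofReal |f s| := by
        refine lintegral_mono_ae ?_
        filter_upwards [ae_restrict_mem measurableSet_Ioo] with s hs
        exact step3 s hs
    _ = ENNReal.ofReal (T ^ α / α) * ∫⁻ s in Ioo (0:ℝ) T, ENNReal.ofReal |f s| :=
        lintegral_const_mul' _ _ ENNReal.ofReal_ne_top

/-- Scalar trace inequality: if `u = u₀ + I^α f` on `(0,T)` with `α ≥ (1+μ)/q`, then
`|u₀| ≤ N (T^{−(1+μ)/q} ‖u‖_{L_q(t^μ)} + T^{α−(1+μ)/q} ‖f‖_{L_q(t^μ)})`. -/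
theorem stmt_8 (α q μ : ℝ) (hα : α ∈ Ioo (0:ℝ) 1) (hq : 1 < q)
    (hμ : μ ∈ Ioo (-1:ℝ) (q-1)) (hαq : (1+μ)/q ≤ α) :
    ∃ N : ℝ, 0 < N ∧ ∀ T : ℝ, 0 < T → ∀ f u : ℝ → ℝ, ∀ u₀ : ℝ,
      Measurable f →
      IntegrableOn (fun t => |f t| ^ q * t ^ μ) (Ioo 0 T) →
      IntegrableOn (fun t => |u t| ^ q * t ^ μ) (Ioo 0 T) →
      (∀ t ∈ Ioo (0:ℝ) T,
        u t = u₀ + (Real.Gamma α)⁻¹ * ∫ s in Ioo (0:ℝ) t, (t - s) ^ (α - 1) * f s) →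
      |u₀| ≤ N * (T ^ (-(1+μ)/q) * (∫ t in Ioo (0:ℝ) T, |u t| ^ q * t ^ μ) ^ (1/q) +
        T ^ (α - (1+μ)/q) * (∫ t in Ioo (0:ℝ) T, |f t| ^ q * t ^ μ) ^ (1/q)) := by
  have hq0 : (0:ℝ) < q := by linarith
  have hΓ : 0 < Real.Gamma α := Real.Gamma_pos_of_pos hα.1
  have hCc : (0:ℝ) < (q-1)/(q-1-μ) := by
    apply div_pos <;> [linarith; linarith [hμ.2]]
  have hC₂ : (0:ℝ) < ((q-1)/(q-1-μ)) ^ (1-1/q) := Real.rpow_pos_of_pos hCc _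
  have hN : (0:ℝ) < 2*((q-1)/(q-1-μ))^(1-1/q)*(1 + (Real.Gamma α)⁻¹/α) := by
    have h1 : (0:ℝ) ≤ (Real.Gamma α)⁻¹/α := div_nonneg (inv_nonneg.2 hΓ.le) hα.1.le
    have h2 : (0:ℝ) < 1 + (Real.Gamma α)⁻¹/α := by linarith
    exact mul_pos (mul_pos two_pos hC₂) h2
  refine ⟨2*((q-1)/(q-1-μ))^(1-1/q)*(1 + (Real.Gamma α)⁻¹/α), hN, ?_⟩
  intro T hT f u u₀ hfm hfint huint hueq
  set C₂ : ℝ := ((q-1)/(q-1-μ)) ^ (1-1/q) with hC₂def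
  have hU0 : 0 ≤ (∫ t in Ioo (0:ℝ) T, |u t| ^ q * t ^ μ) ^ (1/q) :=
    Real.rpow_nonneg (setIntegral_nonneg measurableSet_Ioo fun s hs => by
      have := hs.1; positivity) _
  have hF0 : 0 ≤ (∫ t in Ioo (0:ℝ) T, |f t| ^ q * t ^ μ) ^ (1/q) :=
    Real.rpow_nonneg (setIntegral_nonneg measurableSet_Ioo fun s hs => by
      have := hs.1; positivity) _
  have hTe : (0:ℝ) ≤ T ^ (1 - (1+μ)/q) := (Real.rpow_pos_of_pos hT _).le
  have hsub : Ioo (T/2) T ⊆ Ioo 0 T := Ioo_subset_Ioo (by linarith) le_rfl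
  -- pointwise bound
  have hpt : ∀ t ∈ Ioo (T/2) T, ENNReal.ofReal |u₀| ≤
      ENNReal.ofReal |u t| + ENNReal.ofReal (Real.Gamma α)⁻¹ *
        ∫⁻ s in Ioo (0:ℝ) t, ENNReal.ofReal ((t-s)^(α-1) * |f s|) := by
    intro t ht
    have ht' : t ∈ Ioo 0 T := hsub ht
    have h1 : |u₀| ≤ |u t| + (Real.Gamma α)⁻¹ *
        |∫ s in Ioo (0:ℝ) t, (t - s) ^ (α - 1) * f s| := by
      have e : u₀ = u t - (Real.Gamma α)⁻¹ * ∫ s in Ioo (0:ℝ) t, (t - s) ^ (α - 1) * f s := by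
        rw [hueq t ht']; ring
      rw [e, sub_eq_add_neg]
      refine (abs_add_le _ _).trans ?_
      rw [abs_neg, abs_mul, abs_inv, abs_of_nonneg hΓ.le]
    calc ENNReal.ofReal |u₀|
        ≤ ENNReal.ofReal (|u t| + (Real.Gamma α)⁻¹ *
            |∫ s in Ioo (0:ℝ) t, (t - s) ^ (α - 1) * f s|) := ENNReal.ofReal_le_ofReal h1
      _ = ENNReal.ofReal |u t| + ENNReal.ofReal (Real.Gamma α)⁻¹ *
            ENNReal.ofReal |∫ s in Ioo (0:ℝ) t, (t - s) ^ (α - 1) * f s| := by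
          rw [ENNReal.ofReal_add (abs_nonneg _)
            (mul_nonneg (inv_nonneg.2 hΓ.le) (abs_nonneg _)),
            ENNReal.ofReal_mul (inv_nonneg.2 hΓ.le)]
      _ ≤ ENNReal.ofReal |u t| + ENNReal.ofReal (Real.Gamma α)⁻¹ *
            ∫⁻ s in Ioo (0:ℝ) t, ENNReal.ofReal ((t-s)^(α-1) * |f s|) := by
          gcongr
          calc ENNReal.ofReal |∫ s in Ioo (0:ℝ) t, (t - s) ^ (α - 1) * f s|
              = ‖∫ s in Ioo (0:ℝ) t, (t - s) ^ (α - 1) * f s‖ₑ :=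
                (Real.enorm_eq_ofReal_abs _).symm
            _ ≤ ∫⁻ s in Ioo (0:ℝ) t, ‖(t - s) ^ (α - 1) * f s‖ₑ :=
                enorm_integral_le_lintegral_enorm _
            _ = ∫⁻ s in Ioo (0:ℝ) t, ENNReal.ofReal ((t-s)^(α-1) * |f s|) := by
                refine setLIntegral_congr_fun measurableSet_Ioo (fun s hs => ?_)
                rw [Real.enorm_eq_ofReal_abs, abs_mul,
                  abs_of_nonneg (Real.rpow_nonneg (by linarith [hs.2] : (0:ℝ) ≤ t - s) _)]
  have hA : ∫⁻ t in Ioo (T/2) T, ENNReal.ofReal |u t| ≤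
      ENNReal.ofReal ((∫ t in Ioo (0:ℝ) T, |u t| ^ q * t ^ μ) ^ (1/q) *
        (C₂ * T ^ (1 - (1+μ)/q))) :=
    le_trans (lintegral_mono_set hsub) (holder_aux hq hμ.1 hμ.2 hT u huint)
  have hB : ∫⁻ t in Ioo (T/2) T, (ENNReal.ofReal (Real.Gamma α)⁻¹ *
        ∫⁻ s in Ioo (0:ℝ) t, ENNReal.ofReal ((t-s)^(α-1) * |f s|)) ≤
      ENNReal.ofReal (Real.Gamma α)⁻¹ * (ENNReal.ofReal (T ^ α / α) *
        ENNReal.ofReal ((∫ t in Ioo (0:ℝ) T, |f t| ^ q * t ^ μ) ^ (1/q) *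
          (C₂ * T ^ (1 - (1+μ)/q)))) := by
    rw [lintegral_const_mul' _ _ ENNReal.ofReal_ne_top]
    refine mul_le_mul_right ?_ _
    refine le_trans (kernel_aux hα.1 hα.2 hT f hfm) ?_
    exact mul_le_mul_right (holder_aux hq hμ.1 hμ.2 hT f hfint) _
  have haemeas : AEMeasurable (fun t => ENNReal.ofReal |u t|)
      (volume.restrict (Ioo (T/2) T)) :=
    (ENNReal.measurable_ofReal.comp_aemeasurable (abs_aemeas hq0 u huint)).mono_measure
      (Measure.restrict_mono hsub le_rfl)
  have main : ENNReal.ofReal |u₀| * ENNReal.ofReal (T/2) ≤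
      ENNReal.ofReal ((∫ t in Ioo (0:ℝ) T, |u t| ^ q * t ^ μ) ^ (1/q) *
          (C₂ * T ^ (1 - (1+μ)/q)) +
        (Real.Gamma α)⁻¹ * (T ^ α / α *
          ((∫ t in Ioo (0:ℝ) T, |f t| ^ q * t ^ μ) ^ (1/q) * (C₂ * T ^ (1 - (1+μ)/q))))) := by
    calc ENNReal.ofReal |u₀| * ENNReal.ofReal (T/2)
        = ∫⁻ _ in Ioo (T/2) T, ENNReal.ofReal |u₀| := by
          rw [setLIntegral_const, Real.volume_Ioo, show T - T/2 = T/2 by ring]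
      _ ≤ ∫⁻ t in Ioo (T/2) T, (ENNReal.ofReal |u t| + ENNReal.ofReal (Real.Gamma α)⁻¹ *
            ∫⁻ s in Ioo (0:ℝ) t, ENNReal.ofReal ((t-s)^(α-1) * |f s|)) := by
          refine lintegral_mono_ae ?_
          filter_upwards [ae_restrict_mem measurableSet_Ioo] with t ht
          exact hpt t ht
      _ = (∫⁻ t in Ioo (T/2) T, ENNReal.ofReal |u t|) +
          ∫⁻ t in Ioo (T/2) T, (ENNReal.ofReal (Real.Gamma α)⁻¹ *
            ∫⁻ s in Ioo (0:ℝ) t, ENNReal.ofReal ((t-s)^(α-1) * |f s|)) :=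
          lintegral_add_left' haemeas _
      _ ≤ ENNReal.ofReal ((∫ t in Ioo (0:ℝ) T, |u t| ^ q * t ^ μ) ^ (1/q) *
            (C₂ * T ^ (1 - (1+μ)/q))) +
          ENNReal.ofReal (Real.Gamma α)⁻¹ * (ENNReal.ofReal (T ^ α / α) *
            ENNReal.ofReal ((∫ t in Ioo (0:ℝ) T, |f t| ^ q * t ^ μ) ^ (1/q) *
              (C₂ * T ^ (1 - (1+μ)/q)))) := add_le_add hA hB
      _ = _ := by
          rw [← ENNReal.ofReal_mul (div_nonneg (Real.rpow_nonneg hT.le _) hα.1.le),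
            ← ENNReal.ofReal_mul (inv_nonneg.2 hΓ.le),
            ← ENNReal.ofReal_add (mul_nonneg hU0 (by positivity))
              (mul_nonneg (inv_nonneg.2 hΓ.le)
                (mul_nonneg (div_nonneg (Real.rpow_nonneg hT.le _) hα.1.le)
                  (mul_nonneg hF0 (by positivity))))]
  have hfinal : |u₀| * (T/2) ≤
      (∫ t in Ioo (0:ℝ) T, |u t| ^ q * t ^ μ) ^ (1/q) * (C₂ * T ^ (1 - (1+μ)/q)) +
        (Real.Gamma α)⁻¹ * (T ^ α / α *
          ((∫ t in Ioo (0:ℝ) T, |f t| ^ q * t ^ μ) ^ (1/q) * (C₂ * T ^ (1 - (1+μ)/q)))) := by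
    rw [← ENNReal.ofReal_mul (abs_nonneg _)] at main
    refine (ENNReal.ofReal_le_ofReal_iff ?_).1 main
    have h1 : (0:ℝ) ≤ (∫ t in Ioo (0:ℝ) T, |u t| ^ q * t ^ μ) ^ (1/q) *
        (C₂ * T ^ (1 - (1+μ)/q)) := mul_nonneg hU0 (by positivity)
    have h2 : (0:ℝ) ≤ (Real.Gamma α)⁻¹ * (T ^ α / α *
        ((∫ t in Ioo (0:ℝ) T, |f t| ^ q * t ^ μ) ^ (1/q) * (C₂ * T ^ (1 - (1+μ)/q)))) :=
      mul_nonneg (inv_nonneg.2 hΓ.le)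
        (mul_nonneg (div_nonneg (Real.rpow_nonneg hT.le _) hα.1.le)
          (mul_nonneg hF0 (by positivity)))
    linarith
  -- convert to the required form
  have hrw1 : T ^ (-(1+μ)/q) = T ^ (1 - (1+μ)/q) / T := by
    rw [show -(1+μ)/q = (1 - (1+μ)/q) - 1 by ring, Real.rpow_sub hT, Real.rpow_one]
  have hrw2 : T ^ (α - (1+μ)/q) = T ^ α * T ^ (1 - (1+μ)/q) / T := by
    rw [show α - (1+μ)/q = α + ((1 - (1+μ)/q) - 1) by ring, Real.rpow_add hT,
      Real.rpow_sub hT, Real.rpow_one, mul_div_assoc]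
  set U : ℝ := (∫ t in Ioo (0:ℝ) T, |u t| ^ q * t ^ μ) ^ (1/q) with hUdef
  set F : ℝ := (∫ t in Ioo (0:ℝ) T, |f t| ^ q * t ^ μ) ^ (1/q) with hFdef
  have hgoal2 : |u₀| ≤ 2*C₂*(T ^ (-(1+μ)/q) * U) +
      2*C₂*(Real.Gamma α)⁻¹*α⁻¹*(T ^ (α - (1+μ)/q) * F) := by
    have h2 := (le_div_iff₀ (half_pos hT)).2 hfinal
    refine h2.trans (le_of_eq ?_)
    rw [div_eq_iff (ne_of_gt (half_pos hT)),
      show (1:ℝ)-(1+μ)/q = -(1+μ)/q + 1 by ring,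
      Real.rpow_add hT (-(1+μ)/q) 1, Real.rpow_one,
      show α-(1+μ)/q = α + -(1+μ)/q by ring,
      Real.rpow_add hT α (-(1+μ)/q)]
    ring
  have hB1 : 0 ≤ T ^ (-(1+μ)/q) * U := mul_nonneg (Real.rpow_nonneg hT.le _) hU0
  have hB2 : 0 ≤ T ^ (α - (1+μ)/q) * F := mul_nonneg (Real.rpow_nonneg hT.le _) hF0
  refine hgoal2.trans ?_
  rw [show 2*C₂*(1 + (Real.Gamma α)⁻¹/α) = 2*C₂ + 2*C₂*(Real.Gamma α)⁻¹*α⁻¹ by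
    rw [div_eq_mul_inv]; ring]
  have hx1 : 0 ≤ 2*C₂*(Real.Gamma α)⁻¹*α⁻¹ :=
    mul_nonneg (mul_nonneg (mul_nonneg two_pos.le hC₂.le) (inv_nonneg.2 hΓ.le))
      (inv_nonneg.2 hα.1.le)
  have hx2 : 0 ≤ 2*C₂ := by positivity
  nlinarith [mul_nonneg hx1 hB1, mul_nonneg hx2 hB2,
    mul_nonneg (mul_nonneg hx2 (inv_nonneg.2 hΓ.le)) hB1]
end

section
/- Let α ∈ (0,1) and f ∈ L_q((0,T), t^μ dt) with q ∈ (1,∞), μ ∈ (−1,q−1). If u = I^α f, then ‖t^{−α} u‖_{L_q((0,T), t^μ dt)} ≤ N(α,q,μ) ‖f‖_{L_q((0,T), t^μ dt)}. -/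
open MeasureTheory Set
open scoped ENNReal

-- scaling lemma
lemma scale_lintegral {c : ℝ} (hc : 0 < c) (g : ℝ → ℝ≥0∞) (hg : Measurable g) (b : ℝ) :
    ∫⁻ x in Ioo (0:ℝ) (c*b), g x = ENNReal.ofReal c * ∫⁻ y in Ioo (0:ℝ) b, g (c*y) := by
  have hne : c ≠ 0 := hc.ne'
  have hpre : (fun x => c*x) ⁻¹' (Ioo (0:ℝ) (c*b)) = Ioo 0 b := by
    ext x; simp only [mem_preimage, mem_Ioo]
    constructor
    · rintro ⟨h1, h2⟩
      constructor
      · by_contra h; push_neg at h; nlinarith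
      · by_contra h; push_neg at h; nlinarith
    · rintro ⟨h1, h2⟩; exact ⟨by positivity, by nlinarith⟩
  have h1 : (volume : Measure ℝ).restrict (Ioo 0 (c*b))
      = ENNReal.ofReal c • Measure.map (c * ·) (volume.restrict (Ioo 0 b)) := by
    conv_lhs => rw [← Real.smul_map_volume_mul_left hne]
    rw [abs_of_pos hc, Measure.restrict_smul, Measure.restrict_map (measurable_const_mul c) measurableSet_Ioo, hpre]
  rw [h1, lintegral_smul_measure, lintegral_map hg (measurable_const_mul c), smul_eq_mul]

lemma betaFin {a b : ℝ} (ha : -1 < a) (hb : -1 < b) :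
    ∫⁻ σ in Ioo (0:ℝ) 1, ENNReal.ofReal (σ^a * (1-σ)^b) < ⊤ := by
  have hmeas : Measurable (fun σ : ℝ => σ^a * (1-σ)^b) := by fun_prop
  have h1 : IntegrableOn (fun σ : ℝ => σ^a * (1-σ)^b) (Ioc 0 2⁻¹) := by
    have hint0 : IntegrableOn (fun x : ℝ => x ^ a) (Ioc 0 2⁻¹) := by
      rw [← intervalIntegrable_iff_integrableOn_Ioc_of_le (by norm_num : (0:ℝ) ≤ 2⁻¹)]
      exact intervalIntegral.intervalIntegrable_rpow' ha
    have hint : IntegrableOn (fun x : ℝ => (max 1 ((2:ℝ)⁻¹ ^ b)) * x ^ a) (Ioc 0 2⁻¹) :=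
      hint0.const_mul _
    refine hint.mono' hmeas.aestronglyMeasurable.restrict ?_
    refine (ae_restrict_iff' measurableSet_Ioc).2 (ae_of_all _ fun x hx => ?_)
    have hx0 : 0 < x := hx.1
    have hx2 : x ≤ 2⁻¹ := hx.2
    have h1x : (2:ℝ)⁻¹ ≤ 1 - x := by linarith
    have hbd : (1-x)^b ≤ max 1 ((2:ℝ)⁻¹ ^ b) := by
      rcases le_or_gt 0 b with h | h
      · exact le_max_of_le_left (Real.rpow_le_one (by linarith) (by linarith) h)
      · exact le_max_of_le_right (Real.rpow_le_rpow_of_nonpos (by norm_num) h1x h.le)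
    rw [Real.norm_eq_abs,
      abs_of_nonneg (mul_nonneg (Real.rpow_nonneg hx0.le a) (Real.rpow_nonneg (by linarith) b))]
    calc x^a * (1-x)^b ≤ x^a * (max 1 ((2:ℝ)⁻¹ ^ b)) :=
          mul_le_mul_of_nonneg_left hbd (Real.rpow_nonneg hx0.le a)
      _ = (max 1 ((2:ℝ)⁻¹ ^ b)) * x^a := mul_comm _ _
  have h2 : IntegrableOn (fun σ : ℝ => σ^a * (1-σ)^b) (Ioo 2⁻¹ 1) := by
    have hint0 : IntegrableOn (fun x : ℝ => (1-x) ^ b) (Ioo 2⁻¹ 1) := by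
      rw [← intervalIntegrable_iff_integrableOn_Ioo_of_le (by norm_num : (2:ℝ)⁻¹ ≤ 1)]
      have := (intervalIntegral.intervalIntegrable_rpow' hb (a := 0) (b := 2⁻¹)).comp_sub_left 1
      norm_num at this
      rw [show (2:ℝ)⁻¹ = 1/2 by norm_num]; exact this.symm
    have hint : IntegrableOn (fun x : ℝ => (max 1 ((2:ℝ)⁻¹ ^ a)) * (1-x) ^ b) (Ioo 2⁻¹ 1) :=
      hint0.const_mul _
    refine hint.mono' hmeas.aestronglyMeasurable.restrict ?_
    refine (ae_restrict_iff' measurableSet_Ioo).2 (ae_of_all _ fun x hx => ?_)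
    have hx0 : (2:ℝ)⁻¹ < x := hx.1
    have hx2 : x < 1 := hx.2
    have hbd : x^a ≤ max 1 ((2:ℝ)⁻¹ ^ a) := by
      rcases le_or_gt 0 a with h | h
      · exact le_max_of_le_left (Real.rpow_le_one (by linarith) hx2.le h)
      · exact le_max_of_le_right (Real.rpow_le_rpow_of_nonpos (by norm_num) hx0.le h.le)
    rw [Real.norm_eq_abs,
      abs_of_nonneg (mul_nonneg (Real.rpow_nonneg (by linarith) a) (Real.rpow_nonneg (by linarith) b))]
    exact mul_le_mul_of_nonneg_right hbd (Real.rpow_nonneg (by linarith) b)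
  have hsub : Ioo (0:ℝ) 1 ⊆ Ioc 0 2⁻¹ ∪ Ioo 2⁻¹ 1 := fun x hx => by
    rcases le_or_gt x 2⁻¹ with h | h
    · exact Or.inl ⟨hx.1, h⟩
    · exact Or.inr ⟨h, hx.2⟩
  exact ((h1.union h2).mono_set hsub).setLIntegral_lt_top

/-- If `u = I^α f` then `‖t^{−α} u‖_{L_q((0,T),t^μ dt)} ≤ N(α,q,μ) ‖f‖_{L_q((0,T),t^μ dt)}`
(in the `q`-th power form). -/
theorem stmt_9 (α q μ : ℝ) (hα : α ∈ Ioo (0:ℝ) 1) (hq : 1 < q)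
    (hμ : μ ∈ Ioo (-1:ℝ) (q-1)) :
    ∃ N : ℝ, 0 < N ∧ ∀ T : ℝ, 0 < T → ∀ f : ℝ → ℝ, Measurable f →
      (∫⁻ t in Ioo (0:ℝ) T, ENNReal.ofReal (|f t| ^ q * t ^ μ)) < ⊤ →
      (∫⁻ t in Ioo (0:ℝ) T,
          ENNReal.ofReal (|t ^ (-α) *
            ((Real.Gamma α)⁻¹ * ∫ s in Ioo (0:ℝ) t, (t - s) ^ (α - 1) * f s)| ^ q * t ^ μ)) ≤
        ENNReal.ofReal N *
          ∫⁻ t in Ioo (0:ℝ) T, ENNReal.ofReal (|f t| ^ q * t ^ μ) := by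
  obtain ⟨hα0, hα1⟩ := hα
  obtain ⟨hμ0, hμ1⟩ := hμ
  have hq0 : (0:ℝ) < q := by linarith
  have hq1 : (0:ℝ) < q - 1 := by linarith
  have hγ : 0 < (Real.Gamma α)⁻¹ := inv_pos.2 (Real.Gamma_pos_of_pos hα0)
  set γ := (Real.Gamma α)⁻¹ with hγdef
  set a : ℝ := -(μ + q - 1) / (2*q) with ha
  set q' : ℝ := q / (q - 1) with hq'
  have hconj : q'.HolderConjugate q := by
    exact (Real.HolderConjugate.conjExponent hq).symm
  have he1 : a * q' = -(μ + q - 1) / (2*(q-1)) := by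
    rw [ha, hq']; field_simp
  have he2 : a * q = -(μ + q - 1) / 2 := by
    rw [ha]; field_simp
  have hae1 : -1 < a * q' := by
    rw [he1, neg_div]
    have : (μ + q - 1)/(2*(q-1)) < 1 := (div_lt_one (by linarith)).2 (by linarith)
    linarith
  have hae2 : -1 < -(a*q) - μ - 1 := by
    rw [he2]; rw [neg_div, neg_neg]
    linarith
  set C1 : ℝ≥0∞ := ∫⁻ σ in Ioo (0:ℝ) 1, ENNReal.ofReal (σ^(a*q') * (1-σ)^(α-1)) with hC1def
  set C2 : ℝ≥0∞ := ∫⁻ σ in Ioo (0:ℝ) 1, ENNReal.ofReal (σ^(-(a*q) - μ - 1) * (1-σ)^(α-1))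
    with hC2def
  have hC1 : C1 < ⊤ := betaFin hae1 (by linarith)
  have hC2 : C2 < ⊤ := betaFin hae2 (by linarith)
  set K : ℝ≥0∞ := ENNReal.ofReal γ ^ q * C1 ^ (q-1) * C2 with hKdef
  have hC1p : C1 ^ (q-1) ≠ ⊤ := ENNReal.rpow_ne_top_of_nonneg (by linarith) hC1.ne
  have hK : K ≠ ⊤ := by
    apply ENNReal.mul_ne_top (ENNReal.mul_ne_top ?_ hC1p) hC2.ne
    exact ENNReal.rpow_ne_top_of_nonneg (by linarith) ENNReal.ofReal_ne_top
  refine ⟨K.toReal + 1, by positivity, fun T hT f hf hfin => ?_⟩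
  set F : ℝ → ℝ≥0∞ := fun s => ENNReal.ofReal |f s| with hFdef
  have hFmeas : Measurable F := by fun_prop
  set I : ℝ≥0∞ := ∫⁻ t in Ioo (0:ℝ) T, ENNReal.ofReal (|f t| ^ q * t ^ μ) with hIdef
  have hIeq : ∀ x : ℝ, F x ^ q * ENNReal.ofReal (x^μ) = ENNReal.ofReal (|f x|^q * x^μ) := by
    intro x
    rw [hFdef]
    rw [ENNReal.ofReal_rpow_of_nonneg (abs_nonneg _) hq0.le, ← ENNReal.ofReal_mul (by positivity)]
  set H : ℝ → ℝ≥0∞ := fun t => ∫⁻ σ in Ioo (0:ℝ) 1,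
    ENNReal.ofReal ((1-σ)^(α-1)) * F (t*σ) with hHdef
  set J : ℝ → ℝ≥0∞ := fun t => ∫⁻ σ in Ioo (0:ℝ) 1,
    ENNReal.ofReal (σ^(-(a*q)) * (1-σ)^(α-1)) * F (t*σ)^q with hJdef
  -- Step A+B : pointwise bound
  have stepAB : ∀ t ∈ Ioo (0:ℝ) T,
      ENNReal.ofReal (|t ^ (-α) * (γ * ∫ s in Ioo (0:ℝ) t, (t - s) ^ (α - 1) * f s)| ^ q * t ^ μ)
        ≤ ENNReal.ofReal γ ^ q * ((H t) ^ q * ENNReal.ofReal (t^μ)) := by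
    intro t ht
    obtain ⟨ht0, htT⟩ := ht
    set u : ℝ := ∫ s in Ioo (0:ℝ) t, (t - s) ^ (α - 1) * f s with hu
    set G : ℝ≥0∞ := ∫⁻ s in Ioo (0:ℝ) t, ENNReal.ofReal ((t-s)^(α-1)) * F s with hG
    have hGle : ENNReal.ofReal |u| ≤ G := by
      rw [← Real.enorm_eq_ofReal_abs, hu, hG]
      refine le_trans (enorm_integral_le_lintegral_enorm _) (le_of_eq ?_)
      refine setLIntegral_congr_fun measurableSet_Ioo (fun s hs => ?_)
      rw [Real.enorm_eq_ofReal_abs, abs_mul,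
        abs_of_nonneg (Real.rpow_nonneg (by linarith [hs.2] : (0:ℝ) ≤ t - s) _),
        ENNReal.ofReal_mul (Real.rpow_nonneg (by linarith [hs.2]) _)]
    have hGH : ENNReal.ofReal (t^(-α)) * G = H t := by
      have hgm : Measurable (fun s => ENNReal.ofReal ((t-s)^(α-1)) * F s) := by fun_prop
      have hsc := scale_lintegral ht0 (fun s => ENNReal.ofReal ((t-s)^(α-1)) * F s) hgm 1
      rw [mul_one] at hsc
      rw [hG, hsc, hHdef, ← mul_assoc, ← ENNReal.ofReal_mul (Real.rpow_nonneg ht0.le _),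
        ← lintegral_const_mul' _ _ ENNReal.ofReal_ne_top]
      refine setLIntegral_congr_fun measurableSet_Ioo (fun σ hσ => ?_)
      obtain ⟨hσ0, hσ1⟩ := hσ
      have h1σ : (0:ℝ) < 1 - σ := by linarith
      rw [← mul_assoc, ← ENNReal.ofReal_mul (by positivity)]
      congr 2
      rw [show t - t*σ = t*(1-σ) by ring, Real.mul_rpow ht0.le h1σ.le]
      have h2 : t^(-α) * t * t^(α-1) = 1 := by
        nth_rewrite 2 [← Real.rpow_one t]
        rw [← Real.rpow_add ht0, ← Real.rpow_add ht0]
        norm_num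
      calc t^(-α) * t * (t^(α-1) * (1-σ)^(α-1))
          = (t^(-α) * t * t^(α-1)) * (1-σ)^(α-1) := by ring
        _ = (1-σ)^(α-1) := by rw [h2, one_mul]
    calc ENNReal.ofReal (|t ^ (-α) * (γ * u)| ^ q * t ^ μ)
        = ENNReal.ofReal (|t ^ (-α) * (γ * u)|) ^ q * ENNReal.ofReal (t^μ) := by
          rw [ENNReal.ofReal_mul (by positivity),
            ← ENNReal.ofReal_rpow_of_nonneg (abs_nonneg _) hq0.le]
      _ ≤ (ENNReal.ofReal γ * H t) ^ q * ENNReal.ofReal (t^μ) := by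
          refine mul_le_mul_left (ENNReal.rpow_le_rpow ?_ hq0.le) _
          rw [abs_mul, abs_mul, abs_of_nonneg (Real.rpow_nonneg ht0.le _), abs_of_nonneg hγ.le,
            ENNReal.ofReal_mul (Real.rpow_nonneg ht0.le _), ENNReal.ofReal_mul hγ.le]
          calc ENNReal.ofReal (t^(-α)) * (ENNReal.ofReal γ * ENNReal.ofReal |u|)
              = ENNReal.ofReal γ * (ENNReal.ofReal (t^(-α)) * ENNReal.ofReal |u|) := by ring
            _ ≤ ENNReal.ofReal γ * (ENNReal.ofReal (t^(-α)) * G) :=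
                mul_le_mul_right (mul_le_mul_right hGle _) _
            _ = ENNReal.ofReal γ * H t := by rw [hGH]
      _ = ENNReal.ofReal γ ^ q * ((H t) ^ q * ENNReal.ofReal (t^μ)) := by
          rw [ENNReal.mul_rpow_of_nonneg _ _ hq0.le, mul_assoc]
  -- Step C : Hölder
  have stepC : ∀ t : ℝ, (H t) ^ q ≤ C1 ^ (q-1) * J t := by
    intro t
    have hq'pos : (0:ℝ) < q' := lt_trans one_pos hconj.lt
    set φ : ℝ → ℝ≥0∞ := fun σ => ENNReal.ofReal (σ^a * (1-σ)^((α-1)/q')) with hφ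
    set ψ : ℝ → ℝ≥0∞ := fun σ => ENNReal.ofReal (σ^(-a) * (1-σ)^((α-1)/q)) * F (t*σ) with hψ
    have hsum : (α-1)/q' + (α-1)/q = α-1 := by
      rw [hq']; field_simp; ring
    have hHsplit : H t = ∫⁻ σ in Ioo (0:ℝ) 1, (φ * ψ) σ := by
      rw [hHdef]
      refine setLIntegral_congr_fun measurableSet_Ioo (fun σ hσ => ?_)
      obtain ⟨hσ0, hσ1⟩ := hσ
      have h1σ : (0:ℝ) < 1 - σ := by linarith
      have hr : σ^a * (1-σ)^((α-1)/q') * (σ^(-a) * (1-σ)^((α-1)/q)) = (1-σ)^(α-1) := by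
        rw [show σ^a * (1-σ)^((α-1)/q') * (σ^(-a) * (1-σ)^((α-1)/q))
            = (σ^a * σ^(-a)) * ((1-σ)^((α-1)/q') * (1-σ)^((α-1)/q)) by ring,
          ← Real.rpow_add hσ0, ← Real.rpow_add h1σ, show a + -a = 0 by ring,
          Real.rpow_zero, one_mul, hsum]
      simp only [Pi.mul_apply, hφ, hψ]
      conv_rhs => rw [← mul_assoc, ← ENNReal.ofReal_mul
        (mul_nonneg (Real.rpow_nonneg hσ0.le _) (Real.rpow_nonneg h1σ.le _)), hr]
    have hφm : AEMeasurable φ (volume.restrict (Ioo (0:ℝ) 1)) := by fun_prop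
    have hψm : AEMeasurable ψ (volume.restrict (Ioo (0:ℝ) 1)) := by fun_prop
    have hHolder := ENNReal.lintegral_mul_le_Lp_mul_Lq (volume.restrict (Ioo (0:ℝ) 1)) hconj hφm hψm
    have hφint : (∫⁻ σ in Ioo (0:ℝ) 1, φ σ ^ q') = C1 := by
      rw [hC1def]
      refine setLIntegral_congr_fun measurableSet_Ioo (fun σ hσ => ?_)
      obtain ⟨hσ0, hσ1⟩ := hσ
      have h1σ : (0:ℝ) < 1 - σ := by linarith
      rw [hφ, ENNReal.ofReal_rpow_of_nonneg (by positivity) hq'pos.le]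
      congr 1
      rw [Real.mul_rpow (Real.rpow_nonneg hσ0.le _) (Real.rpow_nonneg h1σ.le _),
        ← Real.rpow_mul hσ0.le, ← Real.rpow_mul h1σ.le, div_mul_cancel₀ _ hq'pos.ne']
    have hψint : (∫⁻ σ in Ioo (0:ℝ) 1, ψ σ ^ q) = J t := by
      rw [hJdef]
      refine setLIntegral_congr_fun measurableSet_Ioo (fun σ hσ => ?_)
      obtain ⟨hσ0, hσ1⟩ := hσ
      have h1σ : (0:ℝ) < 1 - σ := by linarith
      rw [hψ, ENNReal.mul_rpow_of_nonneg _ _ hq0.le,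
        ENNReal.ofReal_rpow_of_nonneg (by positivity) hq0.le]
      congr 2
      rw [Real.mul_rpow (Real.rpow_nonneg hσ0.le _) (Real.rpow_nonneg h1σ.le _),
        ← Real.rpow_mul hσ0.le, ← Real.rpow_mul h1σ.le, div_mul_cancel₀ _ hq0.ne',
        show -a * q = -(a*q) by ring]
    calc (H t)^q ≤ ((∫⁻ σ in Ioo (0:ℝ) 1, φ σ ^ q')^(1/q')
          * (∫⁻ σ in Ioo (0:ℝ) 1, ψ σ ^ q)^(1/q))^q := by
          rw [hHsplit]; exact ENNReal.rpow_le_rpow hHolder hq0.le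
      _ = C1 ^ (q-1) * J t := by
          rw [hφint, hψint, ENNReal.mul_rpow_of_nonneg _ _ hq0.le, ← ENNReal.rpow_mul,
            ← ENNReal.rpow_mul, show 1/q' * q = q - 1 by rw [hq']; field_simp,
            show 1/q * q = 1 by field_simp, ENNReal.rpow_one]
  -- Step F : inner scaling bound
  have stepF : ∀ σ ∈ Ioo (0:ℝ) 1,
      ∫⁻ t in Ioo (0:ℝ) T, F (t*σ)^q * ENNReal.ofReal (t^μ) ≤ ENNReal.ofReal (σ^(-μ-1)) * I := by
    intro σ hσ
    obtain ⟨hσ0, hσ1⟩ := hσ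
    set g : ℝ → ℝ≥0∞ := fun x => F x ^ q * ENNReal.ofReal (x^μ) * ENNReal.ofReal (σ^(-μ)) with hg
    have hgm : Measurable g := by fun_prop
    have hscale := scale_lintegral hσ0 g hgm T
    have hgσ : ∀ t ∈ Ioo (0:ℝ) T, g (σ*t) = F (t*σ)^q * ENNReal.ofReal (t^μ) := by
      intro t ht
      simp only [hg]
      rw [mul_comm σ t, mul_assoc, ← ENNReal.ofReal_mul
        (Real.rpow_nonneg (mul_nonneg ht.1.le hσ0.le) _)]
      congr 2
      rw [Real.mul_rpow ht.1.le hσ0.le, mul_assoc, ← Real.rpow_add hσ0,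
        show μ + -μ = 0 by ring, Real.rpow_zero, mul_one]
    have key : ENNReal.ofReal σ * ∫⁻ t in Ioo (0:ℝ) T, F (t*σ)^q * ENNReal.ofReal (t^μ)
        ≤ ENNReal.ofReal σ * (ENNReal.ofReal (σ^(-μ-1)) * I) := by
      have h1 : (∫⁻ t in Ioo (0:ℝ) T, g (σ*t))
          = ∫⁻ t in Ioo (0:ℝ) T, F (t*σ)^q * ENNReal.ofReal (t^μ) :=
        setLIntegral_congr_fun measurableSet_Ioo hgσ
      rw [← h1, ← hscale]
      have h2 : (∫⁻ x in Ioo (0:ℝ) (σ*T), g x)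
          ≤ (∫⁻ x in Ioo (0:ℝ) T, F x ^ q * ENNReal.ofReal (x^μ)) * ENNReal.ofReal (σ^(-μ)) := by
        rw [← lintegral_mul_const' _ _ ENNReal.ofReal_ne_top]
        exact lintegral_mono_set (Ioo_subset_Ioo le_rfl (by nlinarith))
      refine h2.trans (le_of_eq ?_)
      have h3 : (∫⁻ x in Ioo (0:ℝ) T, F x ^ q * ENNReal.ofReal (x^μ)) = I := by
        rw [hIdef]; exact lintegral_congr fun x => hIeq x
      rw [h3, ← mul_assoc, ← ENNReal.ofReal_mul hσ0.le]
      nth_rewrite 2 [← Real.rpow_one σ]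
      rw [← Real.rpow_add hσ0, show (1:ℝ) + (-μ-1) = -μ by ring, mul_comm]
    have hσne : (ENNReal.ofReal σ) ≠ 0 := (ENNReal.ofReal_pos.2 hσ0).ne'
    exact (ENNReal.mul_le_mul_iff_right hσne ENNReal.ofReal_ne_top).1 key
  -- Step E : swap + combine J
  have stepE : ∫⁻ t in Ioo (0:ℝ) T, J t * ENNReal.ofReal (t^μ) ≤ C2 * I := by
    set W : ℝ → ℝ≥0∞ := fun σ => ENNReal.ofReal (σ^(-(a*q)) * (1-σ)^(α-1)) with hW
    have h1 : ∫⁻ t in Ioo (0:ℝ) T, J t * ENNReal.ofReal (t^μ)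
        = ∫⁻ t in Ioo (0:ℝ) T, ∫⁻ σ in Ioo (0:ℝ) 1,
            W σ * (F (t*σ)^q * ENNReal.ofReal (t^μ)) := by
      refine lintegral_congr fun t => ?_
      rw [hJdef]
      rw [← lintegral_mul_const' _ _ ENNReal.ofReal_ne_top]
      simp_rw [mul_assoc]
      rfl
    have h2 : (∫⁻ t in Ioo (0:ℝ) T, ∫⁻ σ in Ioo (0:ℝ) 1,
            W σ * (F (t*σ)^q * ENNReal.ofReal (t^μ)))
        = ∫⁻ σ in Ioo (0:ℝ) 1, ∫⁻ t in Ioo (0:ℝ) T,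
            W σ * (F (t*σ)^q * ENNReal.ofReal (t^μ)) :=
      lintegral_lintegral_swap (by fun_prop)
    have h3 : ∀ σ : ℝ, (∫⁻ t in Ioo (0:ℝ) T, W σ * (F (t*σ)^q * ENNReal.ofReal (t^μ)))
        = W σ * ∫⁻ t in Ioo (0:ℝ) T, F (t*σ)^q * ENNReal.ofReal (t^μ) := fun σ =>
      lintegral_const_mul' _ _ ENNReal.ofReal_ne_top
    rw [h1, h2]
    simp_rw [h3]
    calc (∫⁻ σ in Ioo (0:ℝ) 1, W σ * ∫⁻ t in Ioo (0:ℝ) T, F (t*σ)^q * ENNReal.ofReal (t^μ))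
        ≤ ∫⁻ σ in Ioo (0:ℝ) 1, W σ * (ENNReal.ofReal (σ^(-μ-1)) * I) :=
          lintegral_mono_ae ((ae_restrict_iff' measurableSet_Ioo).2 (ae_of_all _
            fun σ hσ => mul_le_mul_right (stepF σ hσ) _))
      _ = (∫⁻ σ in Ioo (0:ℝ) 1, W σ * ENNReal.ofReal (σ^(-μ-1))) * I := by
          rw [← lintegral_mul_const' _ _ hfin.ne]
          simp_rw [mul_assoc]
      _ ≤ C2 * I := by
          refine mul_le_mul_left (le_of_eq ?_) I
          rw [hC2def]
          refine setLIntegral_congr_fun measurableSet_Ioo (fun σ hσ => ?_)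
          obtain ⟨hσ0, hσ1⟩ := hσ
          have h1σ : (0:ℝ) < 1 - σ := by linarith
          simp only [hW]
          rw [← ENNReal.ofReal_mul (mul_nonneg (Real.rpow_nonneg hσ0.le _)
            (Real.rpow_nonneg h1σ.le _))]
          congr 1
          rw [show σ^(-(a*q)) * (1-σ)^(α-1) * σ^(-μ-1)
              = (σ^(-(a*q)) * σ^(-μ-1)) * (1-σ)^(α-1) by ring,
            ← Real.rpow_add hσ0, show -(a*q) + (-μ-1) = -(a*q) - μ - 1 by ring]
  -- assembly
  calc (∫⁻ t in Ioo (0:ℝ) T,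
          ENNReal.ofReal (|t ^ (-α) * (γ * ∫ s in Ioo (0:ℝ) t, (t - s) ^ (α - 1) * f s)| ^ q * t ^ μ))
      ≤ ∫⁻ t in Ioo (0:ℝ) T, ENNReal.ofReal γ ^ q * ((H t) ^ q * ENNReal.ofReal (t^μ)) :=
        lintegral_mono_ae ((ae_restrict_iff' measurableSet_Ioo).2 (ae_of_all _ stepAB))
    _ = ENNReal.ofReal γ ^ q * ∫⁻ t in Ioo (0:ℝ) T, (H t) ^ q * ENNReal.ofReal (t^μ) :=
        lintegral_const_mul' _ _ (ENNReal.rpow_ne_top_of_nonneg hq0.le ENNReal.ofReal_ne_top)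
    _ ≤ ENNReal.ofReal γ ^ q * ∫⁻ t in Ioo (0:ℝ) T, (C1 ^ (q-1) * J t) * ENNReal.ofReal (t^μ) := by
        refine mul_le_mul_right (lintegral_mono fun t => ?_) _
        exact mul_le_mul_left (stepC t) _
    _ = ENNReal.ofReal γ ^ q * (C1 ^ (q-1) * ∫⁻ t in Ioo (0:ℝ) T, J t * ENNReal.ofReal (t^μ)) := by
        rw [← lintegral_const_mul' _ _ hC1p]
        simp_rw [mul_assoc]
    _ ≤ ENNReal.ofReal γ ^ q * (C1 ^ (q-1) * (C2 * I)) := by gcongr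
    _ = K * I := by rw [hKdef]; ring
    _ ≤ ENNReal.ofReal (K.toReal + 1) * I := by
        refine mul_le_mul_left ?_ I
        conv_lhs => rw [← ENNReal.ofReal_toReal hK]
        exact ENNReal.ofReal_le_ofReal (by linarith)
end
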